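/- arXiv:1608.00715 — 4 statements merged into one kernel-verified Lean document; each statement's English description precedes it below -/
import Mathlib

section
/- Let n ≥ 1 and let μ be a weak composition of n. In the weighted boolean algebra B_n^w (whose closed intervals are finite), the Möbius function satisfies μ_P(0̂, ([n],μ)) = (−1)^n · |Ninc_μ|. -/
/-- The weighted boolean algebra `B_n^w`. -/
@[ext] structure WSub (n : ℕ) where
  carrier : Finset (Fin n)
  wt : Multiset ℕ
  card_eq : Multiset.card wt = carrier.card

instance {n : ℕ} : PartialOrder (WSub n) where
  le p q := p.carrier ⊆ q.carrier ∧ p.wt ≤ q.wt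
  le_refl p := ⟨subset_rfl, le_rfl⟩
  le_trans a b c hab hbc := ⟨hab.1.trans hbc.1, hab.2.trans hbc.2⟩
  le_antisymm a b hab hba :=
    WSub.ext (Finset.Subset.antisymm hab.1 hba.1) (le_antisymm hab.2 hba.2)

def content {n : ℕ} (c : Fin n → ℕ) : Multiset ℕ := Finset.univ.val.map c

/-- An ascent of the colored permutation `(σ, c)`. -/
def HasAscent {n : ℕ} {C : Type*} [Preorder C] (σ : Equiv.Perm (Fin n)) (c : Fin n → C) : Prop :=
  ∃ i : ℕ, ∃ h : i + 1 < n,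
    σ ⟨i, Nat.lt_of_succ_lt h⟩ < σ ⟨i + 1, h⟩ ∧
      c (σ ⟨i, Nat.lt_of_succ_lt h⟩) ≤ c (σ ⟨i + 1, h⟩)

namespace WBA

open List

variable {n : ℕ}

abbrev Letter (n : ℕ) := Fin n × ℕ

def Asc {n : ℕ} (a b : Letter n) : Prop := a.1 < b.1 ∧ a.2 ≤ b.2

instance {n : ℕ} : DecidableRel (Asc (n := n)) := fun _ _ => instDecidableAnd

instance : IsTrans (Letter n) Asc := ⟨fun _ _ _ h1 h2 => ⟨h1.1.trans h2.1, h1.2.trans h2.2⟩⟩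

/-- bottom element -/
def bo (n : ℕ) : WSub n := ⟨∅, 0, by simp⟩

lemma le_def {z z' : WSub n} : z ≤ z' ↔ z.carrier ⊆ z'.carrier ∧ z.wt ≤ z'.wt := Iff.rfl

lemma bo_le (z : WSub n) : bo n ≤ z := ⟨Finset.empty_subset _, zero_le⟩

instance : DecidableEq (WSub n) := fun a b =>
  decidable_of_iff (a.carrier = b.carrier ∧ a.wt = b.wt)
    ⟨fun h => WSub.ext h.1 h.2, fun h => by cases h; exact ⟨rfl, rfl⟩⟩

lemma eq_bo_iff {z : WSub n} : z = bo n ↔ z.carrier = ∅ := by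
  constructor
  · rintro rfl; rfl
  · intro h
    have hw : z.wt = 0 := by
      have := z.card_eq
      rw [h] at this
      simpa using Multiset.card_eq_zero.mp (by simpa using this)
    exact WSub.ext (by simpa [bo] using h) (by simpa [bo] using hw)

lemma eq_of_le_of_carrier_eq {z z' : WSub n} (h : z ≤ z') (hc : z.carrier = z'.carrier) :
    z = z' :=
  WSub.ext hc (Multiset.eq_of_le_of_card_le h.2 (by rw [z.card_eq, z'.card_eq, hc]))

lemma card_lt_of_lt {z z' : WSub n} (h : z < z') : z.carrier.card < z'.carrier.card := by
  refine Finset.card_lt_card ⟨h.le.1, fun hsub => ?_⟩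
  exact h.ne (eq_of_le_of_carrier_eq h.le (Finset.Subset.antisymm h.le.1 hsub))

/-! ### words -/

def mf (w : List (Letter n)) : Multiset (Fin n) := (w.map Prod.fst : List (Fin n))
def ms (w : List (Letter n)) : Multiset ℕ := (w.map Prod.snd : List ℕ)

@[simp] lemma card_mf (w : List (Letter n)) : Multiset.card (mf w) = w.length := by
  simp [mf]

@[simp] lemma card_ms (w : List (Letter n)) : Multiset.card (ms w) = w.length := by
  simp [ms]

@[simp] lemma mf_append (w w' : List (Letter n)) : mf (w ++ w') = mf w + mf w' := by
  simp [mf]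

@[simp] lemma ms_append (w w' : List (Letter n)) : ms (w ++ w') = ms w + ms w' := by
  simp [ms]

@[simp] lemma mf_nil : mf ([] : List (Letter n)) = 0 := rfl
@[simp] lemma ms_nil : ms ([] : List (Letter n)) = 0 := rfl

lemma mf_eq_zero {w : List (Letter n)} : mf w = 0 ↔ w = [] := by
  constructor
  · intro h
    have : w.length = 0 := by rw [← card_mf w, h]; simp
    exact List.length_eq_zero_iff.mp this
  · rintro rfl; rfl

/-! ### rising words -/

def zipRise (d : Multiset (Fin n)) (e : Multiset ℕ) : List (Letter n) :=
  (d.sort (· ≤ ·)).zip (e.sort (· ≤ ·))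

lemma zipRise_length {d : Multiset (Fin n)} {e : Multiset ℕ}
    (h : Multiset.card d = Multiset.card e) :
    (zipRise d e).length = Multiset.card d := by
  simp [zipRise, h]

lemma zipRise_map_fst {d : Multiset (Fin n)} {e : Multiset ℕ}
    (h : Multiset.card d = Multiset.card e) :
    (zipRise d e).map Prod.fst = d.sort (· ≤ ·) := by
  apply List.map_fst_zip
  simp [h]

lemma zipRise_map_snd {d : Multiset (Fin n)} {e : Multiset ℕ}
    (h : Multiset.card d = Multiset.card e) :
    (zipRise d e).map Prod.snd = e.sort (· ≤ ·) := by
  apply List.map_snd_zip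
  simp [h]

lemma zipRise_mf {d : Multiset (Fin n)} {e : Multiset ℕ}
    (h : Multiset.card d = Multiset.card e) : mf (zipRise d e) = d := by
  rw [mf, zipRise_map_fst h, Multiset.sort_eq]

lemma zipRise_ms {d : Multiset (Fin n)} {e : Multiset ℕ}
    (h : Multiset.card d = Multiset.card e) : ms (zipRise d e) = e := by
  rw [ms, zipRise_map_snd h, Multiset.sort_eq]

lemma zipRise_ne_nil {d : Multiset (Fin n)} {e : Multiset ℕ}
    (h : Multiset.card d = Multiset.card e) (hd : d ≠ 0) : zipRise d e ≠ [] := by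
  intro hcon
  apply hd
  have := zipRise_length h
  rw [hcon] at this
  simpa using this.symm

lemma zipRise_chain' {d : Multiset (Fin n)} {e : Multiset ℕ}
    (h : Multiset.card d = Multiset.card e) (hd : d.Nodup) :
    (zipRise d e).Chain' Asc := by
  rw [List.Chain', List.isChain_iff_getElem]
  intro i hi
  show Asc ((zipRise d e).get ⟨i, by omega⟩) ((zipRise d e).get ⟨i+1, hi⟩)
  have hlen : (zipRise d e).length = Multiset.card d := zipRise_length h
  have hlen1 : (d.sort (· ≤ ·)).length = Multiset.card d := by simp
  have hlen2 : (e.sort (· ≤ ·)).length = Multiset.card e := by simp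
  have hi1 : i < (d.sort (· ≤ ·)).length - 1 := by omega
  have hi2 : i < (e.sort (· ≤ ·)).length - 1 := by omega
  have hs1 : (d.sort (· ≤ ·)).Pairwise (· ≤ ·) := Multiset.pairwise_sort _ _
  have hs2 : (e.sort (· ≤ ·)).Pairwise (· ≤ ·) := Multiset.pairwise_sort _ _
  have hnd : (d.sort (· ≤ ·)).Nodup := by
    rw [← Multiset.coe_nodup, Multiset.sort_eq]; exact hd
  have hg : ∀ (j : ℕ) (hj : j < (zipRise d e).length),
      (zipRise d e).get ⟨j, hj⟩ =
        ((d.sort (· ≤ ·)).get ⟨j, by omega⟩, (e.sort (· ≤ ·)).get ⟨j, by omega⟩) := by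
    intro j hj
    have hj' : j < ((d.sort (· ≤ ·)).zip (e.sort (· ≤ ·))).length := hj
    show ((d.sort (· ≤ ·)).zip (e.sort (· ≤ ·))).get ⟨j, hj'⟩ = _
    rw [List.get_eq_getElem, List.getElem_zip]
    simp [List.get_eq_getElem]
  rw [hg i (by omega), hg (i+1) (by omega)]
  constructor
  · refine lt_of_le_of_ne ?_ ?_
    · exact hs1.rel_get_of_lt (by simp)
    · intro hcon
      have h2 : i = i + 1 := by
        simpa using List.nodup_iff_injective_get.mp hnd hcon
      omega
  · exact hs2.rel_get_of_lt (by simp)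

lemma eq_zipRise_of_chain' {w : List (Letter n)} (h : w.Chain' Asc) :
    w = zipRise (mf w) (ms w) := by
  have hp : w.Pairwise Asc := List.isChain_iff_pairwise.1 h
  have h1 : (w.map Prod.fst).Pairwise (· ≤ ·) := by
    rw [List.pairwise_map]
    exact hp.imp fun hab => le_of_lt hab.1
  have h2 : (w.map Prod.snd).Pairwise (· ≤ ·) := by
    rw [List.pairwise_map]
    exact hp.imp fun hab => hab.2
  have e1 : w.map Prod.fst = (mf w).sort (· ≤ ·) := by
    refine List.Perm.eq_of_pairwise' h1 (Multiset.pairwise_sort _ _) ?_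
    rw [← Multiset.coe_eq_coe, Multiset.sort_eq]
    rfl
  have e2 : w.map Prod.snd = (ms w).sort (· ≤ ·) := by
    refine List.Perm.eq_of_pairwise' h2 (Multiset.pairwise_sort _ _) ?_
    rw [← Multiset.coe_eq_coe, Multiset.sort_eq]
    rfl
  conv_lhs => rw [← List.zip_unzip w, List.unzip_eq_map]
  rw [zipRise, ← e1, ← e2]

/-! ### block sequences -/

def blocksOK (π : List (List (Letter n))) : Prop := ∀ b ∈ π, b ≠ [] ∧ b.Chain' Asc

def valid (z : WSub n) (π : List (List (Letter n))) : Prop :=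
  blocksOK π ∧ mf π.flatten = z.carrier.val ∧ ms π.flatten = z.wt

def validLE (z : WSub n) (π : List (List (Letter n))) : Prop :=
  blocksOK π ∧ mf π.flatten ≤ z.carrier.val ∧ ms π.flatten ≤ z.wt

lemma validLE_of_valid {z : WSub n} {π} (h : valid z π) : validLE z π :=
  ⟨h.1, le_of_eq h.2.1, le_of_eq h.2.2⟩

@[simp] lemma card_carrier_val (z : WSub n) : Multiset.card z.carrier.val = z.carrier.card := rfl

lemma valid_of_validLE_of_mf {z : WSub n} {π} (h : validLE z π)
    (he : mf π.flatten = z.carrier.val) : valid z π := by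
  refine ⟨h.1, he, Multiset.eq_of_le_of_card_le h.2.2 ?_⟩
  rw [card_ms, z.card_eq, ← card_carrier_val, ← he, card_mf]

/-! ### the complement involution -/

def cBlock (z : WSub n) (π : List (List (Letter n))) : List (Letter n) :=
  zipRise (z.carrier.val - mf π.flatten) (z.wt - ms π.flatten)

def Jmap (z : WSub n) (π : List (List (Letter n))) : List (List (Letter n)) :=
  if mf π.flatten = z.carrier.val then π.dropLast else π ++ [cBlock z π]

lemma cBlock_cards {z : WSub n} {π} (h : validLE z π) :
    Multiset.card (z.carrier.val - mf π.flatten) = Multiset.card (z.wt - ms π.flatten) := by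
  rw [Multiset.card_sub h.2.1, Multiset.card_sub h.2.2, card_mf, card_ms, z.card_eq,
    card_carrier_val]

lemma Jmap_append {z : WSub n} {π} (h : validLE z π) (hne : mf π.flatten ≠ z.carrier.val) :
    valid z (Jmap z π) ∧ Jmap z π = π ++ [cBlock z π] ∧ (Jmap z π).length = π.length + 1 := by
  have hJ : Jmap z π = π ++ [cBlock z π] := if_neg hne
  have hcards := cBlock_cards h
  have hd0 : z.carrier.val - mf π.flatten ≠ 0 := by
    rw [Ne, tsub_eq_zero_iff_le]
    exact fun hle => hne (le_antisymm h.2.1 hle)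
  have hnodup : (z.carrier.val - mf π.flatten).Nodup :=
    Multiset.nodup_of_le tsub_le_self z.carrier.nodup
  have hflat : (π ++ [cBlock z π]).flatten = π.flatten ++ cBlock z π := by
    rw [List.flatten_append]; simp
  refine ⟨⟨?_, ?_, ?_⟩, hJ, by rw [hJ]; simp⟩
  · intro b hb
    rw [hJ, List.mem_append] at hb
    rcases hb with hb | hb
    · exact h.1 b hb
    · have : b = cBlock z π := by simpa using hb
      subst this
      exact ⟨zipRise_ne_nil hcards hd0, zipRise_chain' hcards hnodup⟩
  · rw [hJ, hflat, mf_append, cBlock, zipRise_mf hcards]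
    exact add_tsub_cancel_of_le h.2.1
  · rw [hJ, hflat, ms_append, cBlock, zipRise_ms hcards]
    exact add_tsub_cancel_of_le h.2.2

lemma Jmap_drop {z : WSub n} {π} (h : validLE z π) (heq : mf π.flatten = z.carrier.val)
    (hz : z ≠ bo n) :
    validLE z π.dropLast ∧ mf π.dropLast.flatten ≠ z.carrier.val ∧
      Jmap z π.dropLast = π ∧ π.length = π.dropLast.length + 1 := by
  have hv : valid z π := valid_of_validLE_of_mf h heq
  have hπ : π ≠ [] := by
    rintro rfl
    apply hz
    apply eq_bo_iff.mpr
    have : z.carrier.val = 0 := by rw [← heq]; rfl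
    exact Finset.val_eq_zero.mp this
  set b := π.getLast hπ with hb
  have hsp : π.dropLast ++ [b] = π := List.dropLast_append_getLast hπ
  have hbmem : b ∈ π := List.getLast_mem hπ
  have hbOK := h.1 b hbmem
  have hflat : π.flatten = π.dropLast.flatten ++ b := by
    conv_lhs => rw [← hsp]
    rw [List.flatten_append]; simp
  have hmf : mf π.flatten = mf π.dropLast.flatten + mf b := by rw [hflat, mf_append]
  have hms : ms π.flatten = ms π.dropLast.flatten + ms b := by rw [hflat, ms_append]
  have hle1 : mf π.dropLast.flatten ≤ z.carrier.val := by
    rw [← heq, hmf]; exact self_le_add_right _ _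
  have hle2 : ms π.dropLast.flatten ≤ z.wt := by
    rw [← hv.2.2, hms]; exact self_le_add_right _ _
  have hvd : validLE z π.dropLast := by
    refine ⟨fun b' hb' => h.1 b' ((List.dropLast_sublist π).subset hb'), hle1, hle2⟩
  have hne : mf π.dropLast.flatten ≠ z.carrier.val := by
    intro hcon
    have : mf b = 0 := by
      have := hmf
      rw [heq, ← hcon] at this
      exact (left_eq_add.mp this)
    exact hbOK.1 (mf_eq_zero.mp this)
  refine ⟨hvd, hne, ?_, by rw [← hsp]; simp⟩
  have hcB : cBlock z π.dropLast = b := by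
    have e1 : z.carrier.val - mf π.dropLast.flatten = mf b := by
      rw [← heq, hmf]; exact add_tsub_cancel_left _ _
    have e2 : z.wt - ms π.dropLast.flatten = ms b := by
      rw [← hv.2.2, hms]; exact add_tsub_cancel_left _ _
    rw [cBlock, e1, e2]
    exact (eq_zipRise_of_chain' hbOK.2).symm
  rw [Jmap, if_neg hne, hcB, hsp]

lemma Jmap_invol {z : WSub n} {π} (h : validLE z π) (hz : z ≠ bo n) :
    validLE z (Jmap z π) ∧ Jmap z (Jmap z π) = π ∧
      (Even (Jmap z π).length ↔ ¬ Even π.length) := by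
  by_cases heq : mf π.flatten = z.carrier.val
  · obtain ⟨hvd, hne, hJd, hlen⟩ := Jmap_drop h heq hz
    have hJ : Jmap z π = π.dropLast := if_pos heq
    rw [hJ]
    refine ⟨hvd, hJd, ?_⟩
    rw [hlen, Nat.even_add_one]
    tauto
  · obtain ⟨hv, hJ, hlen⟩ := Jmap_append h heq
    refine ⟨validLE_of_valid hv, ?_, ?_⟩
    · rw [Jmap, if_pos hv.2.1, hJ, List.dropLast_concat]
    · rw [hlen, Nat.even_add_one]

/-! ### finiteness -/

lemma finite_len_le {α : Type*} {K : Set α} (hK : K.Finite) :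
    ∀ N : ℕ, {l : List α | l.length ≤ N ∧ ∀ a ∈ l, a ∈ K}.Finite
  | 0 => by
      apply Set.Finite.subset (Set.finite_singleton ([] : List α))
      rintro l ⟨hl, -⟩
      have : l = [] := List.length_eq_zero_iff.mp (Nat.le_zero.mp hl)
      simp [this]
  | (N+1) => by
      have hprev := finite_len_le hK N
      have himg : {l : List α | l.length ≤ N+1 ∧ ∀ a ∈ l, a ∈ K} ⊆
          insert [] ((fun p : α × List α => p.1 :: p.2) ''
            (K ×ˢ {l : List α | l.length ≤ N ∧ ∀ a ∈ l, a ∈ K})) := by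
        rintro l ⟨hlen, hmem⟩
        cases l with
        | nil => exact Set.mem_insert _ _
        | cons a t =>
            refine Set.mem_insert_of_mem _
              ⟨(a, t), ⟨hmem a (List.mem_cons_self),
                ⟨by simpa using hlen, fun x hx => hmem x (List.mem_cons_of_mem _ hx)⟩⟩, rfl⟩
      exact Set.Finite.subset (((hK.prod hprev).image _).insert _) himg

lemma finite_words (v₁ : Multiset (Fin n)) (v₂ : Multiset ℕ) :
    {w : List (Letter n) | mf w ≤ v₁ ∧ ms w ≤ v₂}.Finite := by
  have hK : ({a : Letter n | a.1 ∈ v₁ ∧ a.2 ∈ v₂}).Finite := by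
    have hsub : {a : Letter n | a.1 ∈ v₁ ∧ a.2 ∈ v₂} ⊆ ↑(v₁.toFinset ×ˢ v₂.toFinset) := by
      rintro ⟨x, c⟩ ⟨h1, h2⟩
      simp only [Finset.coe_product, Set.mem_prod, Finset.mem_coe, Multiset.mem_toFinset]
      exact ⟨h1, h2⟩
    exact Set.Finite.subset (Finset.finite_toSet _) hsub
  apply Set.Finite.subset (finite_len_le hK (Multiset.card v₁))
  rintro w ⟨h1, h2⟩
  refine ⟨?_, ?_⟩
  · have := Multiset.card_le_card h1
    rwa [card_mf] at this
  · intro a ha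
    refine ⟨Multiset.mem_of_le h1 ?_, Multiset.mem_of_le h2 ?_⟩
    · exact Multiset.mem_coe.mpr (List.mem_map_of_mem (f := Prod.fst) ha)
    · exact Multiset.mem_coe.mpr (List.mem_map_of_mem (f := Prod.snd) ha)

lemma flatten_length_ge {α : Type*} {π : List (List α)} (h : ∀ b ∈ π, b ≠ []) :
    π.length ≤ π.flatten.length := by
  induction π with
  | nil => simp
  | cons b t ih =>
      simp only [List.flatten_cons, List.length_append, List.length_cons]
      have hb : 1 ≤ b.length := by
        have hbne := h b (List.mem_cons_self)
        cases b with
        | nil => exact absurd rfl hbne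
        | cons _ _ => simp
      have := ih (fun b' hb' => h b' (List.mem_cons_of_mem _ hb'))
      omega

lemma finite_validLE (z : WSub n) : {π : List (List (Letter n)) | validLE z π}.Finite := by
  have hK : {b : List (Letter n) | mf b ≤ z.carrier.val ∧ ms b ≤ z.wt}.Finite :=
    finite_words _ _
  apply Set.Finite.subset (finite_len_le hK z.carrier.card)
  rintro π ⟨hb, h1, h2⟩
  refine ⟨?_, ?_⟩
  · have hlen : π.length ≤ π.flatten.length := flatten_length_ge (fun b hbm => (hb b hbm).1)
    have hlen2 : π.flatten.length ≤ z.carrier.card := by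
      have := Multiset.card_le_card h1
      rw [card_mf] at this
      simpa using this
    omega
  · intro b hbm
    have hsub : b.Sublist π.flatten := List.sublist_flatten_of_mem hbm
    have h1' : mf b ≤ mf π.flatten := Multiset.coe_le.mpr ((hsub.map Prod.fst).subperm)
    have h2' : ms b ≤ ms π.flatten := Multiset.coe_le.mpr ((hsub.map Prod.snd).subperm)
    exact ⟨le_trans h1' h1, le_trans h2' h2⟩

lemma fin_valid (z : WSub n) (P : List (List (Letter n)) → Prop) :
    Finite {π // valid z π ∧ P π} := by
  have hsub : {π | valid z π ∧ P π} ⊆ {π | validLE z π} := fun π h => validLE_of_valid h.1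
  exact ((finite_validLE z).subset hsub).to_subtype

lemma fin_validLE (z : WSub n) (P : List (List (Letter n)) → Prop) :
    Finite {π // validLE z π ∧ P π} := by
  have hsub : {π | validLE z π ∧ P π} ⊆ {π | validLE z π} := fun π h => h.1
  exact ((finite_validLE z).subset hsub).to_subtype

/-! ### the signed count -/

noncomputable def sigZ (z : WSub n) : ℤ :=
  (Nat.card {π : List (List (Letter n)) // valid z π ∧ Even π.length} : ℤ) -
    (Nat.card {π : List (List (Letter n)) // valid z π ∧ ¬ Even π.length} : ℤ)

noncomputable def JEquiv (z : WSub n) (hz : z ≠ bo n) :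
    {π : List (List (Letter n)) // validLE z π ∧ Even π.length} ≃
      {π : List (List (Letter n)) // validLE z π ∧ ¬ Even π.length} where
  toFun p := ⟨Jmap z p.1, (Jmap_invol p.2.1 hz).1, by
    have h := (Jmap_invol p.2.1 hz).2.2
    have := p.2.2
    tauto⟩
  invFun p := ⟨Jmap z p.1, (Jmap_invol p.2.1 hz).1, by
    have h := (Jmap_invol p.2.1 hz).2.2
    have := p.2.2
    tauto⟩
  left_inv p := Subtype.ext (Jmap_invol p.2.1 hz).2.1
  right_inv p := Subtype.ext (Jmap_invol p.2.1 hz).2.1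

/-! ### gluing -/

def totalW (z : WSub n) {π : List (List (Letter n))} (h : validLE z π) : WSub n :=
  ⟨⟨mf π.flatten, Multiset.nodup_of_le h.2.1 z.carrier.nodup⟩, ms π.flatten, by
    rw [card_ms]
    show _ = Multiset.card (mf π.flatten)
    rw [card_mf]⟩

lemma totalW_le (z : WSub n) {π} (h : validLE z π) : totalW z h ≤ z :=
  ⟨Finset.val_le_iff.mp h.2.1, h.2.2⟩

lemma valid_totalW (z : WSub n) {π} (h : validLE z π) : valid (totalW z h) π :=
  ⟨h.1, rfl, rfl⟩

lemma valid_unique {z z' : WSub n} {π} (h : valid z π) (h' : valid z' π) : z = z' := by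
  refine WSub.ext (Finset.val_inj.mp ?_) ?_
  · rw [← h.2.1, h'.2.1]
  · rw [← h.2.2, h'.2.2]

lemma validLE_mono {z z' : WSub n} {π} (h : valid z' π) (hle : z' ≤ z) : validLE z π :=
  ⟨h.1, h.2.1 ▸ Finset.val_le_iff.mpr hle.1, h.2.2 ▸ hle.2⟩

lemma nat_card_sigma {ι : Type*} [Fintype ι] (F : ι → Type*) [∀ i, Finite (F i)] :
    Nat.card (Σ i, F i) = ∑ i, Nat.card (F i) := by
  letI : ∀ i, Fintype (F i) := fun i => Fintype.ofFinite (F i)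
  simp_rw [Nat.card_eq_fintype_card]
  exact Fintype.card_sigma

lemma card_glue (z : WSub n) (S : WSub n → WSub n → Finset (WSub n))
    (hS : ∀ x y z : WSub n, z ∈ S x y ↔ x ≤ z ∧ z ≤ y) (P : ℕ → Prop) :
    Nat.card {π : List (List (Letter n)) // validLE z π ∧ P π.length} =
      ∑ z' ∈ S (bo n) z, Nat.card {π : List (List (Letter n)) // valid z' π ∧ P π.length} := by
  classical
  haveI : ∀ z' : (S (bo n) z : Finset (WSub n)),
      Finite {π : List (List (Letter n)) // valid z'.1 π ∧ P π.length} :=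
    fun z' => fin_valid _ _
  have hcard : Nat.card {π : List (List (Letter n)) // validLE z π ∧ P π.length} =
      Nat.card (Σ z' : (S (bo n) z : Finset (WSub n)),
        {π : List (List (Letter n)) // valid z'.1 π ∧ P π.length}) := by
    refine (Nat.card_congr (Equiv.ofBijective
      (fun x : (Σ z' : (S (bo n) z : Finset (WSub n)),
        {π : List (List (Letter n)) // valid z'.1 π ∧ P π.length}) =>
        (⟨x.2.1, validLE_mono x.2.2.1 ((hS _ _ _).mp x.1.2).2, x.2.2.2⟩ :
          {π : List (List (Letter n)) // validLE z π ∧ P π.length})) ⟨?_, ?_⟩)).symm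
    · rintro ⟨⟨z1, hz1⟩, ⟨π1, h1⟩⟩ ⟨⟨z2, hz2⟩, ⟨π2, h2⟩⟩ hgg
      have hπ : π1 = π2 := congrArg Subtype.val hgg
      subst hπ
      have hzz : z1 = z2 := valid_unique h1.1 h2.1
      subst hzz
      rfl
    · rintro ⟨π, hππ, hP⟩
      exact ⟨⟨⟨totalW z hππ, (hS _ _ _).mpr ⟨bo_le _, totalW_le z hππ⟩⟩,
        ⟨π, valid_totalW z hππ, hP⟩⟩, rfl⟩
  rw [hcard, nat_card_sigma, ← Finset.sum_coe_sort (S (bo n) z)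
    (fun z' => Nat.card {π : List (List (Letter n)) // valid z' π ∧ P π.length})]

lemma sum_sigZ (z : WSub n) (hz : z ≠ bo n) (S : WSub n → WSub n → Finset (WSub n))
    (hS : ∀ x y z : WSub n, z ∈ S x y ↔ x ≤ z ∧ z ≤ y) :
    ∑ z' ∈ S (bo n) z, sigZ z' = 0 := by
  unfold sigZ
  rw [Finset.sum_sub_distrib, ← Nat.cast_sum, ← Nat.cast_sum,
    ← card_glue z S hS (fun m => Even m), ← card_glue z S hS (fun m => ¬ Even m)]
  haveI := fin_validLE z (fun π => Even π.length)
  rw [Nat.card_congr (JEquiv z hz)]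
  exact sub_self _

/-! ### value at the bottom -/

lemma valid_bo_iff {π : List (List (Letter n))} : valid (bo n) π ↔ π = [] := by
  constructor
  · rintro ⟨hb, h1, -⟩
    have hfl : π.flatten = [] := by
      apply mf_eq_zero.mp
      rw [h1]
      rfl
    cases π with
    | nil => rfl
    | cons b t =>
        exfalso
        rw [List.flatten_cons] at hfl
        exact (hb b (List.mem_cons_self)).1 (List.append_eq_nil_iff.mp hfl).1
  · rintro rfl
    exact ⟨fun b hb => absurd hb List.not_mem_nil, rfl, rfl⟩

lemma sigZ_bo : sigZ (bo n) = 1 := by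
  have h1 : Nat.card {π : List (List (Letter n)) // valid (bo n) π ∧ Even π.length} = 1 := by
    haveI : Unique {π : List (List (Letter n)) // valid (bo n) π ∧ Even π.length} :=
      { default := ⟨[], valid_bo_iff.mpr rfl, by simp⟩
        uniq := fun p => Subtype.ext (valid_bo_iff.mp p.2.1) }
    exact Nat.card_unique
  have h2 : Nat.card {π : List (List (Letter n)) // valid (bo n) π ∧ ¬ Even π.length} = 0 := by
    haveI : IsEmpty {π : List (List (Letter n)) // valid (bo n) π ∧ ¬ Even π.length} :=
      ⟨fun p => p.2.2 (by rw [valid_bo_iff.mp p.2.1]; simp)⟩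
    exact Nat.card_of_isEmpty
  unfold sigZ
  rw [h1, h2]
  norm_num

/-! ### the Möbius recursion determines f -/

lemma f_eq_sigZ (S : WSub n → WSub n → Finset (WSub n))
    (hS : ∀ x y z : WSub n, z ∈ S x y ↔ x ≤ z ∧ z ≤ y)
    (f : WSub n → WSub n → ℤ)
    (hrefl : ∀ x : WSub n, f x x = 1)
    (hrec : ∀ x y : WSub n, x < y → ∑ z ∈ S x y, f x z = 0) :
    ∀ z : WSub n, f (bo n) z = sigZ z := by
  have key : ∀ m : ℕ, ∀ z : WSub n, z.carrier.card = m → f (bo n) z = sigZ z := by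
    intro m
    induction m using Nat.strong_induction_on with
    | _ m ih =>
      intro z hz
      by_cases hbo : z = bo n
      · subst hbo
        rw [hrefl, sigZ_bo]
      · have hlt : bo n < z := lt_of_le_of_ne (bo_le z) (Ne.symm hbo)
        have hsum := hrec _ _ hlt
        have hzmem : z ∈ S (bo n) z := (hS _ _ _).mpr ⟨bo_le z, le_refl z⟩
        rw [← Finset.add_sum_erase _ _ hzmem] at hsum
        have hterm : ∀ z' ∈ (S (bo n) z).erase z, f (bo n) z' = sigZ z' := by
          intro z' hz'
          have hmem := Finset.mem_of_mem_erase hz'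
          have hne := Finset.ne_of_mem_erase hz'
          have hlt' : z' < z := lt_of_le_of_ne ((hS _ _ _).mp hmem).2 hne
          exact ih _ (hz ▸ card_lt_of_lt hlt') z' rfl
        rw [Finset.sum_congr rfl hterm] at hsum
        have hglue := sum_sigZ z hbo S hS
        rw [← Finset.add_sum_erase _ _ hzmem] at hglue
        linarith
  exact fun z => key z.carrier.card z rfl

/-! ### the split/merge involution -/

def iota3 : List (List (Letter n)) → List (List (Letter n))
  | [] => []
  | [] :: rest => [] :: rest
  | (x :: y :: bs) :: rest => [x] :: (y :: bs) :: rest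
  | [x] :: [] => [[x]]
  | [x] :: [] :: rest => [x] :: [] :: rest
  | [x] :: (y :: cs) :: rest =>
      if Asc x y then (x :: y :: cs) :: rest else [x] :: iota3 ((y :: cs) :: rest)

@[simp] lemma iota3_nil : iota3 ([] : List (List (Letter n))) = [] := rfl

@[simp] lemma iota3_split (x y : Letter n) (bs : List (Letter n))
    (rest : List (List (Letter n))) :
    iota3 ((x :: y :: bs) :: rest) = [x] :: (y :: bs) :: rest := rfl

@[simp] lemma iota3_single (x : Letter n) : iota3 [[x]] = [[x]] := rfl

lemma iota3_merge_case (x y : Letter n) (cs : List (Letter n))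
    (rest : List (List (Letter n))) :
    iota3 ([x] :: (y :: cs) :: rest) =
      if Asc x y then (x :: y :: cs) :: rest else [x] :: iota3 ((y :: cs) :: rest) := rfl

lemma blocksOK_cons {b : List (Letter n)} {π : List (List (Letter n))} :
    blocksOK (b :: π) ↔ (b ≠ [] ∧ b.Chain' Asc) ∧ blocksOK π := by
  simp [blocksOK, List.forall_mem_cons]

lemma iota3_flatten : ∀ π : List (List (Letter n)), (iota3 π).flatten = π.flatten
  | [] => rfl
  | [] :: _ => rfl
  | (x :: y :: bs) :: rest => by simp
  | [x] :: [] => rfl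
  | [x] :: [] :: rest => rfl
  | [x] :: (y :: cs) :: rest => by
      by_cases h : Asc x y
      · rw [iota3_merge_case, if_pos h]
        simp
      · rw [iota3_merge_case, if_neg h]
        have ih := iota3_flatten ((y :: cs) :: rest)
        simp only [List.flatten_cons] at ih ⊢
        rw [ih]

lemma iota3_blocksOK : ∀ π : List (List (Letter n)), blocksOK π → blocksOK (iota3 π)
  | [] => fun h => h
  | [] :: _ => fun h => h
  | (x :: y :: bs) :: rest => fun h => by
      rw [blocksOK_cons] at h
      rw [iota3_split, blocksOK_cons, blocksOK_cons]
      refine ⟨⟨List.cons_ne_nil _ _, List.isChain_singleton _⟩,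
        ⟨List.cons_ne_nil _ _, ?_⟩, h.2⟩
      exact h.1.2.tail
  | [x] :: [] => fun h => h
  | [x] :: [] :: rest => fun h => h
  | [x] :: (y :: cs) :: rest => fun h => by
      rw [iota3_merge_case]
      rw [blocksOK_cons, blocksOK_cons] at h
      by_cases hxy : Asc x y
      · rw [if_pos hxy, blocksOK_cons]
        exact ⟨⟨List.cons_ne_nil _ _, List.isChain_cons_cons.mpr ⟨hxy, h.2.1.2⟩⟩, h.2.2⟩
      · rw [if_neg hxy, blocksOK_cons]
        refine ⟨h.1, iota3_blocksOK _ (blocksOK_cons.mpr h.2)⟩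

lemma iota3_shape : ∀ (y : Letter n) (cs : List (Letter n)) (rest : List (List (Letter n))),
    ∃ cs' rest', iota3 ((y :: cs) :: rest) = (y :: cs') :: rest'
  | y, c :: cs₂, rest => ⟨[], (c :: cs₂) :: rest, rfl⟩
  | y, [], [] => ⟨[], [], rfl⟩
  | y, [], [] :: rest => ⟨[], [] :: rest, rfl⟩
  | y, [], (u :: us) :: rest => by
      rw [iota3_merge_case]
      by_cases h : Asc y u
      · exact ⟨u :: us, rest, by rw [if_pos h]⟩
      · exact ⟨[], iota3 ((u :: us) :: rest), by rw [if_neg h]⟩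

lemma iota3_invol : ∀ π : List (List (Letter n)), blocksOK π → iota3 (iota3 π) = π
  | [] => fun _ => rfl
  | [] :: rest => fun h => absurd rfl (h [] (List.mem_cons_self)).1
  | (x :: y :: bs) :: rest => fun h => by
      rw [iota3_split, iota3_merge_case, if_pos]
      exact (List.isChain_cons_cons.mp (h _ (List.mem_cons_self)).2).1
  | [x] :: [] => fun _ => rfl
  | [x] :: [] :: rest => fun h =>
      absurd rfl (h [] (List.mem_cons_of_mem _ (List.mem_cons_self))).1
  | [x] :: (y :: cs) :: rest => fun h => by
      rw [iota3_merge_case]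
      by_cases hxy : Asc x y
      · rw [if_pos hxy, iota3_split]
      · rw [if_neg hxy]
        obtain ⟨cs', rest', hshape⟩ := iota3_shape y cs rest
        rw [hshape, iota3_merge_case, if_neg hxy, ← hshape,
          iota3_invol ((y :: cs) :: rest) (fun b hb => h b (List.mem_cons_of_mem _ hb))]

lemma iota3_len : ∀ π : List (List (Letter n)), blocksOK π →
    iota3 π = π ∨ (iota3 π).length = π.length + 1 ∨ π.length = (iota3 π).length + 1
  | [] => fun _ => Or.inl rfl
  | [] :: rest => fun h => absurd rfl (h [] (List.mem_cons_self)).1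
  | (x :: y :: bs) :: rest => fun _ => Or.inr (Or.inl (by rw [iota3_split]; simp))
  | [x] :: [] => fun _ => Or.inl rfl
  | [x] :: [] :: rest => fun h =>
      absurd rfl (h [] (List.mem_cons_of_mem _ (List.mem_cons_self))).1
  | [x] :: (y :: cs) :: rest => fun h => by
      rw [iota3_merge_case]
      by_cases hxy : Asc x y
      · rw [if_pos hxy]
        exact Or.inr (Or.inr (by simp))
      · rw [if_neg hxy]
        rcases iota3_len ((y :: cs) :: rest) (fun b hb => h b (List.mem_cons_of_mem _ hb)) with
          heq | hlen | hlen
        · exact Or.inl (by rw [heq])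
        · refine Or.inr (Or.inl ?_)
          simp only [List.length_cons] at hlen ⊢
          omega
        · refine Or.inr (Or.inr ?_)
          simp only [List.length_cons] at hlen ⊢
          omega

lemma iota3_fix_struct : ∀ π : List (List (Letter n)), blocksOK π → iota3 π = π →
    π = π.flatten.map (fun a => [a]) ∧ π.flatten.Chain' (fun a b => ¬ Asc a b)
  | [] => fun _ _ => ⟨rfl, List.isChain_nil⟩
  | [] :: rest => fun h _ => absurd rfl (h [] (List.mem_cons_self)).1
  | (x :: y :: bs) :: rest => fun _ hfix => by
      exfalso
      rw [iota3_split] at hfix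
      injection hfix with h1 _
      injection h1 with _ h3
      exact (List.cons_ne_nil y bs) h3.symm
  | [x] :: [] => fun _ _ => ⟨rfl, by simp [List.Chain']⟩
  | [x] :: [] :: rest => fun h _ =>
      absurd rfl (h [] (List.mem_cons_of_mem _ (List.mem_cons_self))).1
  | [x] :: (y :: cs) :: rest => fun h hfix => by
      rw [iota3_merge_case] at hfix
      by_cases hxy : Asc x y
      · rw [if_pos hxy] at hfix
        exfalso
        injection hfix with h1 _
        injection h1 with _ h3
        exact (List.cons_ne_nil y cs) h3
      · rw [if_neg hxy] at hfix
        injection hfix with _ h2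
        obtain ⟨hstruct, hchain⟩ :=
          iota3_fix_struct ((y :: cs) :: rest) (fun b hb => h b (List.mem_cons_of_mem _ hb)) h2
        have hfl : ([x] :: (y :: cs) :: rest).flatten = x :: ((y :: cs) :: rest).flatten := by
          simp
        constructor
        · rw [hfl, List.map_cons, ← hstruct]
        · rw [hfl]
          refine List.isChain_cons.mpr ⟨?_, hchain⟩
          intro y' hy'
          have : y' = y := by
            simp only [List.flatten_cons, List.cons_append, List.head?_cons,
              Option.mem_def, Option.some.injEq] at hy'
            exact hy'.symm
          rwa [this]

lemma iota3_fix_of : ∀ w : List (Letter n), w.Chain' (fun a b => ¬ Asc a b) →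
    iota3 (w.map (fun a => [a])) = w.map (fun a => [a])
  | [] => fun _ => rfl
  | [a] => fun _ => rfl
  | a :: b :: t => fun h => by
      show iota3 ([a] :: [b] :: t.map _) = _
      rw [iota3_merge_case, if_neg (List.isChain_cons_cons.mp h).1]
      have ih := iota3_fix_of (b :: t) (List.isChain_cons_cons.mp h).2
      simp only [List.map_cons] at ih
      rw [ih]
      rfl

/-! ### evaluating sigZ via the involution -/

def FallV (z : WSub n) :=
  {w : List (Letter n) // mf w = z.carrier.val ∧ ms w = z.wt ∧
    w.Chain' (fun a b => ¬ Asc a b)}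

lemma card_split' {α : Type*} (P Q : α → Prop) [Finite {x // P x}] :
    Nat.card {x // P x} = Nat.card {x // P x ∧ Q x} + Nat.card {x // P x ∧ ¬ Q x} := by
  classical
  have e : {x // P x} ≃ {x // P x ∧ Q x} ⊕ {x // P x ∧ ¬ Q x} :=
    { toFun := fun x => if h : Q x.1 then Sum.inl ⟨x.1, x.2, h⟩ else Sum.inr ⟨x.1, x.2, h⟩
      invFun := fun s => match s with
        | Sum.inl x => ⟨x.1, x.2.1⟩
        | Sum.inr x => ⟨x.1, x.2.1⟩
      left_inv := fun x => by by_cases h : Q x.1 <;> simp [h]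
      right_inv := fun s => by
        rcases s with x | x
        · simp [x.2.2]
        · simp [x.2.2] }
  haveI : Finite {x // P x ∧ Q x} :=
    Finite.of_injective (fun a : {x // P x ∧ Q x} => (⟨a.1, a.2.1⟩ : {x // P x}))
      (fun a b hab => by injection hab with h1; exact Subtype.ext h1)
  haveI : Finite {x // P x ∧ ¬ Q x} :=
    Finite.of_injective (fun a : {x // P x ∧ ¬ Q x} => (⟨a.1, a.2.1⟩ : {x // P x}))
      (fun a b hab => by injection hab with h1; exact Subtype.ext h1)
  rw [Nat.card_congr e, Nat.card_sum]

lemma flatten_map_singleton (w : List (Letter n)) :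
    (w.map (fun a => ([a] : List (Letter n)))).flatten = w := by
  induction w with
  | nil => rfl
  | cons a t ih => simp [ih]

lemma valid_iota3 {z : WSub n} {π} (h : valid z π) : valid z (iota3 π) :=
  ⟨iota3_blocksOK π h.1, by rw [iota3_flatten]; exact h.2.1,
    by rw [iota3_flatten]; exact h.2.2⟩

lemma fix_length {z : WSub n} {π} (h : valid z π) (hfix : iota3 π = π) :
    π.length = z.carrier.card := by
  obtain ⟨hstruct, -⟩ := iota3_fix_struct π h.1 hfix
  have hl : π.length = π.flatten.length := by
    conv_lhs => rw [hstruct]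
    rw [List.length_map]
  rw [hl, ← card_mf, h.2.1, card_carrier_val]

lemma parity_flip {π : List (List (Letter n))} (hOK : blocksOK π) (hne : iota3 π ≠ π) :
    Even (iota3 π).length ↔ ¬ Even π.length := by
  rcases iota3_len π hOK with heq | hlen | hlen
  · exact absurd heq hne
  · rw [hlen, Nat.even_add_one]
  · rw [hlen, Nat.even_add_one, not_not]

lemma iota3_ne {π : List (List (Letter n))} (hOK : blocksOK π) (hne : iota3 π ≠ π) :
    iota3 (iota3 π) ≠ iota3 π := by
  rw [iota3_invol π hOK]
  exact Ne.symm hne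

noncomputable def swapEquiv (z : WSub n) :
    {π : List (List (Letter n)) // (valid z π ∧ Even π.length) ∧ iota3 π ≠ π} ≃
      {π : List (List (Letter n)) // (valid z π ∧ ¬ Even π.length) ∧ iota3 π ≠ π} where
  toFun p := ⟨iota3 p.1,
    ⟨valid_iota3 p.2.1.1, fun hcon => ((parity_flip p.2.1.1.1 p.2.2).mp hcon) p.2.1.2⟩,
    iota3_ne p.2.1.1.1 p.2.2⟩
  invFun p := ⟨iota3 p.1,
    ⟨valid_iota3 p.2.1.1, by
      have hpf := parity_flip p.2.1.1.1 p.2.2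
      have := p.2.1.2
      tauto⟩,
    iota3_ne p.2.1.1.1 p.2.2⟩
  left_inv p := Subtype.ext (iota3_invol p.1 p.2.1.1.1)
  right_inv p := Subtype.ext (iota3_invol p.1 p.2.1.1.1)

noncomputable def fixEquiv (z : WSub n) :
    {π : List (List (Letter n)) // valid z π ∧ iota3 π = π} ≃ FallV z where
  toFun p := ⟨p.1.flatten, p.2.1.2.1, p.2.1.2.2, (iota3_fix_struct p.1 p.2.1.1 p.2.2).2⟩
  invFun w := ⟨w.1.map (fun a => [a]),
    ⟨fun b hb => by
        obtain ⟨a, -, rfl⟩ := List.mem_map.mp hb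
        exact ⟨List.cons_ne_nil _ _, List.isChain_singleton _⟩,
      by rw [flatten_map_singleton]; exact w.2.1,
      by rw [flatten_map_singleton]; exact w.2.2.1⟩,
    iota3_fix_of w.1 w.2.2.2⟩
  left_inv p := Subtype.ext ((iota3_fix_struct p.1 p.2.1.1 p.2.2).1).symm
  right_inv w := Subtype.ext (flatten_map_singleton w.1)

lemma sigZ_eq_fall (z : WSub n) :
    sigZ z = (-1) ^ z.carrier.card * (Nat.card (FallV z) : ℤ) := by
  classical
  haveI hF1 : Finite {π : List (List (Letter n)) // valid z π ∧ Even π.length} :=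
    fin_valid z _
  haveI hF2 : Finite {π : List (List (Letter n)) // valid z π ∧ ¬ Even π.length} :=
    fin_valid z _
  have hE := card_split' (fun π : List (List (Letter n)) => valid z π ∧ Even π.length)
    (fun π => iota3 π = π)
  have hO := card_split' (fun π : List (List (Letter n)) => valid z π ∧ ¬ Even π.length)
    (fun π => iota3 π = π)
  have hswap :
      Nat.card {π : List (List (Letter n)) // (valid z π ∧ Even π.length) ∧ ¬ iota3 π = π} =
      Nat.card {π : List (List (Letter n)) // (valid z π ∧ ¬ Even π.length) ∧ ¬ iota3 π = π} :=
    Nat.card_congr (swapEquiv z)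
  by_cases hm : Even z.carrier.card
  · have hOfix :
        Nat.card {π : List (List (Letter n)) //
          (valid z π ∧ ¬ Even π.length) ∧ iota3 π = π} = 0 := by
      haveI : IsEmpty {π : List (List (Letter n)) //
          (valid z π ∧ ¬ Even π.length) ∧ iota3 π = π} :=
        ⟨fun p => p.2.1.2 (by rw [fix_length p.2.1.1 p.2.2]; exact hm)⟩
      exact Nat.card_of_isEmpty
    have hEfix :
        Nat.card {π : List (List (Letter n)) //
          (valid z π ∧ Even π.length) ∧ iota3 π = π} = Nat.card (FallV z) := by
      refine Nat.card_congr ((Equiv.subtypeEquivRight ?_).trans (fixEquiv z))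
      intro π
      constructor
      · rintro ⟨⟨hv, -⟩, hfix⟩
        exact ⟨hv, hfix⟩
      · rintro ⟨hv, hfix⟩
        exact ⟨⟨hv, by rw [fix_length hv hfix]; exact hm⟩, hfix⟩
    unfold sigZ
    rw [hE, hO, hOfix, hEfix, hswap, Even.neg_one_pow hm]
    push_cast
    ring
  · have hEfix :
        Nat.card {π : List (List (Letter n)) //
          (valid z π ∧ Even π.length) ∧ iota3 π = π} = 0 := by
      haveI : IsEmpty {π : List (List (Letter n)) //
          (valid z π ∧ Even π.length) ∧ iota3 π = π} :=
        ⟨fun p => hm (by rw [← fix_length p.2.1.1 p.2.2]; exact p.2.1.2)⟩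
      exact Nat.card_of_isEmpty
    have hOfix :
        Nat.card {π : List (List (Letter n)) //
          (valid z π ∧ ¬ Even π.length) ∧ iota3 π = π} = Nat.card (FallV z) := by
      refine Nat.card_congr ((Equiv.subtypeEquivRight ?_).trans (fixEquiv z))
      intro π
      constructor
      · rintro ⟨⟨hv, -⟩, hfix⟩
        exact ⟨hv, hfix⟩
      · rintro ⟨hv, hfix⟩
        exact ⟨⟨hv, by rw [fix_length hv hfix]; exact hm⟩, hfix⟩
    unfold sigZ
    rw [hE, hO, hEfix, hOfix, hswap, Odd.neg_one_pow (Nat.not_even_iff_odd.mp hm)]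
    push_cast
    ring

/-! ### falling words and ascent-free colored permutations -/

lemma univ_val_finRange (m : ℕ) :
    ((List.finRange m : List (Fin m)) : Multiset (Fin m)) =
      (Finset.univ : Finset (Fin m)).val := by
  rw [Fin.univ_def]

lemma perm_ofFn_val (σ : Equiv.Perm (Fin n)) :
    ((List.ofFn σ : List (Fin n)) : Multiset (Fin n)) =
      (Finset.univ : Finset (Fin n)).val := by
  rw [List.ofFn_eq_map, ← Multiset.map_coe, univ_val_finRange]
  conv_rhs => rw [← Finset.map_univ_equiv σ]
  rw [Finset.map_val]
  rfl

def gmap (σ : Equiv.Perm (Fin n)) (c : Fin n → ℕ) : List (Letter n) :=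
  List.ofFn (fun i => (σ i, c (σ i)))

lemma mf_gmap (σ : Equiv.Perm (Fin n)) (c : Fin n → ℕ) :
    mf (gmap σ c) = (Finset.univ : Finset (Fin n)).val := by
  rw [mf, gmap, List.map_ofFn]
  exact perm_ofFn_val σ

lemma ms_gmap (σ : Equiv.Perm (Fin n)) (c : Fin n → ℕ) :
    ms (gmap σ c) = content c := by
  rw [ms, gmap, List.map_ofFn]
  show ((List.ofFn (fun i => c (σ i)) : List ℕ) : Multiset ℕ) = content c
  have h1 : List.ofFn (fun i => c (σ i)) = List.map c (List.ofFn σ) := by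
    rw [List.map_ofFn]
    rfl
  rw [h1, ← Multiset.map_coe, perm_ofFn_val, content]

lemma length_gmap (σ : Equiv.Perm (Fin n)) (c : Fin n → ℕ) : (gmap σ c).length = n := by
  simp [gmap]

lemma noasc_gmap_iff (σ : Equiv.Perm (Fin n)) (c : Fin n → ℕ) :
    (gmap σ c).Chain' (fun a b => ¬ Asc a b) ↔ ¬ HasAscent σ c := by
  constructor
  · intro h hA
    obtain ⟨i, hilt, hlt, hle⟩ := hA
    rw [List.Chain', List.isChain_iff_getElem] at h
    have hi : i + 1 < (gmap σ c).length := by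
      rw [length_gmap]; omega
    apply h i hi
    simp only [List.get_eq_getElem, gmap, List.getElem_ofFn]
    exact ⟨hlt, hle⟩
  · intro hA
    rw [List.Chain', List.isChain_iff_getElem]
    intro i hi hAsc
    apply hA
    have hilt : i + 1 < n := by
      rw [length_gmap] at hi; omega
    refine ⟨i, hilt, ?_, ?_⟩
    · have := hAsc.1
      simpa only [List.get_eq_getElem, gmap, List.getElem_ofFn] using this
    · have := hAsc.2
      simpa only [List.get_eq_getElem, gmap, List.getElem_ofFn] using this

lemma card_fall_top (z : WSub n) (μ : Multiset ℕ) (hz1 : z.carrier = Finset.univ)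
    (hz2 : z.wt = μ) :
    Nat.card (FallV z) = Nat.card {w : Equiv.Perm (Fin n) × (Fin n → ℕ) //
        content w.2 = μ ∧ ¬ HasAscent w.1 w.2} := by
  subst hz2
  refine (Nat.card_congr (Equiv.ofBijective
    (fun p : {w : Equiv.Perm (Fin n) × (Fin n → ℕ) //
        content w.2 = z.wt ∧ ¬ HasAscent w.1 w.2} =>
      (⟨gmap p.1.1 p.1.2, by rw [hz1]; exact mf_gmap _ _, by rw [ms_gmap]; exact p.2.1,
        (noasc_gmap_iff _ _).mpr p.2.2⟩ : FallV z)) ⟨?_, ?_⟩)).symm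
  · rintro ⟨⟨σ₁, c₁⟩, h₁⟩ ⟨⟨σ₂, c₂⟩, h₂⟩ hgg
    have hF : (fun i => (σ₁ i, c₁ (σ₁ i))) = (fun i => (σ₂ i, c₂ (σ₂ i))) :=
      List.ofFn_inj.mp (congrArg Subtype.val hgg)
    have hσ : σ₁ = σ₂ := Equiv.ext fun i => congrArg Prod.fst (congrFun hF i)
    subst hσ
    have hc : c₁ = c₂ := by
      funext x
      obtain ⟨i, rfl⟩ := σ₁.surjective x
      exact congrArg Prod.snd (congrFun hF i)
    subst hc
    rfl
  · rintro ⟨w, h1, h2, h3⟩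
    have hlen : w.length = n := by
      have hc := congrArg Multiset.card h1
      rw [card_mf] at hc
      rw [card_carrier_val, hz1] at hc
      simpa using hc
    have hnd : (w.map Prod.fst).Nodup := by
      have hh : (mf w).Nodup := by
        rw [h1]
        exact z.carrier.nodup
      exact Multiset.coe_nodup.mp hh
    set σ₀ : Fin n → Fin n := fun i => (w.get (Fin.cast hlen.symm i)).1 with hσ₀
    have hinj : Function.Injective σ₀ := by
      intro i j hij
      have hi : (i : ℕ) < (w.map Prod.fst).length := by
        rw [List.length_map, hlen]; exact i.2
      have hj : (j : ℕ) < (w.map Prod.fst).length := by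
        rw [List.length_map, hlen]; exact j.2
      have e1 : σ₀ i = (w.map Prod.fst).get ⟨(i : ℕ), hi⟩ := by
        simp [hσ₀, List.get_eq_getElem, List.getElem_map]
      have e2 : σ₀ j = (w.map Prod.fst).get ⟨(j : ℕ), hj⟩ := by
        simp [hσ₀, List.get_eq_getElem, List.getElem_map]
      have hg : (w.map Prod.fst).get ⟨(i : ℕ), hi⟩ = (w.map Prod.fst).get ⟨(j : ℕ), hj⟩ := by
        rw [← e1, ← e2]; exact hij
      have hmk := List.nodup_iff_injective_get.mp hnd hg
      injection hmk with hv
      exact Fin.ext hv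
    set σ : Equiv.Perm (Fin n) :=
      Equiv.ofBijective σ₀ (Finite.injective_iff_bijective.mp hinj) with hσdef
    set c : Fin n → ℕ := fun x => (w.get (Fin.cast hlen.symm (σ.symm x))).2 with hcdef
    have hσap : ∀ i : Fin n, σ i = σ₀ i := fun i => rfl
    have hw : gmap σ c = w := by
      apply List.ext_get (by rw [length_gmap, hlen])
      intro t ht1 ht2
      have ht3 : t < n := by rwa [length_gmap] at ht1
      simp only [gmap, List.get_eq_getElem, List.getElem_ofFn]
      have e3 : σ ⟨t, ht3⟩ = (w.get ⟨t, ht2⟩).1 := by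
        rw [hσap, hσ₀]
        simp [List.get_eq_getElem]
      have e4 : c (σ ⟨t, ht3⟩) = (w.get ⟨t, ht2⟩).2 := by
        rw [hcdef]
        simp only [Equiv.symm_apply_apply]
        simp [List.get_eq_getElem]
      rw [List.get_eq_getElem] at e3 e4
      rw [e4, e3]
    refine ⟨⟨(σ, c), ?_, ?_⟩, Subtype.ext hw⟩
    · have hms := ms_gmap σ c
      rw [hw] at hms
      rw [← hms]
      exact h2
    · exact (noasc_gmap_iff σ c).mp (by rw [hw]; exact h3)

end WBA

theorem moebius_of_maximal_interval (n : ℕ) (hn : 1 ≤ n) (μ : Multiset ℕ)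
    (hμ : Multiset.card μ = n)
    (S : WSub n → WSub n → Finset (WSub n))
    (hS : ∀ x y z : WSub n, z ∈ S x y ↔ x ≤ z ∧ z ≤ y)
    (f : WSub n → WSub n → ℤ)
    (hrefl : ∀ x : WSub n, f x x = 1)
    (hrec : ∀ x y : WSub n, x < y → ∑ z ∈ S x y, f x z = 0) :
    f (⟨∅, 0, by simp⟩ : WSub n) (⟨Finset.univ, μ, by simp [hμ]⟩ : WSub n) =
      (-1) ^ n *
        (Nat.card {w : Equiv.Perm (Fin n) × (Fin n → ℕ) //
          content w.2 = μ ∧ ¬ HasAscent w.1 w.2} : ℤ) := by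
  classical
  set top : WSub n := ⟨Finset.univ, μ, by simp [hμ]⟩ with htop
  have h1 : f (WBA.bo n) top = WBA.sigZ top := WBA.f_eq_sigZ S hS f hrefl hrec top
  have h2 := WBA.sigZ_eq_fall top
  have h3 : top.carrier.card = n := by simp [htop]
  have h4 := WBA.card_fall_top top μ rfl rfl
  show f (WBA.bo n) top = _
  rw [h1, h2, h3, h4]
end

section
/- Fix n ≥ 1 and k ≥ 1, and let P be the finite bounded poset obtained from B_n^{[k]} by adjoining a maximum 1̂. Then the Möbius function of P satisfies μ_P(0̂, 1̂) = (−1)^{n+1} · |{ (σ,c) ∈ Ninc_n^{[k]} : c(σ(n)) ≠ 1 }|. -/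
/-!
STATEMENT 12: in the finite bounded poset P = B_n^{[k]} ∪ {1̂},
μ_P(0̂, 1̂) = (−1)^{n+1} · |{(σ,c) ∈ Ninc_n^{[k]} : c(σ(n)) ≠ 1}|.

Conventions.  Colors {1,…,k} are modeled by `Fin k` (0-indexed, order-isomorphic), so
c(σ(n)) ≠ 1 becomes (c (σ (n-1))).val ≠ 0 (positions 0-indexed).  Weak compositions with
support in [k] are multisets over `Fin k`.  The Möbius function is axiomatized by its
defining recursion: `f` is any function with `f x x = 1` and `∑_{x ≤ z ≤ y} f x z = 0`
for `x < y`, where for each pair `x, y` the finset `S x y` enumerates the elements of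
the closed interval [x,y].
-/

@[ext] structure WSubK (n k : ℕ) where
  carrier : Finset (Fin n)
  wt : Multiset (Fin k)
  card_eq : Multiset.card wt = carrier.card

instance {n k : ℕ} : PartialOrder (WSubK n k) where
  le p q := p.carrier ⊆ q.carrier ∧ p.wt ≤ q.wt
  le_refl p := ⟨subset_rfl, le_rfl⟩
  le_trans a b c hab hbc := ⟨hab.1.trans hbc.1, hab.2.trans hbc.2⟩
  le_antisymm a b hab hba :=
    WSubK.ext (Finset.Subset.antisymm hab.1 hba.1) (le_antisymm hab.2 hba.2)

open Finset

namespace MBAux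

open scoped Classical

variable {n k : ℕ}

abbrev Letter (n k : ℕ) := Fin n × Fin k

/-- no-ascent relation between consecutive letters -/
def NA (p q : Letter n k) : Prop := ¬ (p.1 < q.1 ∧ p.2 ≤ q.2)

def fsts (l : List (Letter n k)) : List (Fin n) := l.map Prod.fst

def cnt (l : List (Letter n k)) (c : Fin k) : ℕ := (l.map Prod.snd).count c

def OK (l : List (Letter n k)) : Prop := l.Chain' NA ∧ (fsts l).Nodup

structure Ctx (n k : ℕ) where
  A : Finset (Fin n)
  β : Fin k → ℕ∞

def memC (Γ : Ctx n k) (l : List (Letter n k)) : Prop :=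
  (∀ p ∈ l, p.1 ∈ Γ.A) ∧ ∀ c, (cnt l c : ℕ∞) ≤ Γ.β c

noncomputable def ins (Γ : Ctx n k) (l : List (Letter n k)) : Finset (Letter n k) :=
  Finset.univ.filter fun p =>
    p.1 ∈ Γ.A ∧ p.1 ∉ fsts l ∧ ((cnt l p.2 : ℕ∞) < Γ.β p.2) ∧ ∀ q ∈ l.getLast?, NA q p

lemma mem_ins {Γ : Ctx n k} {l : List (Letter n k)} {p : Letter n k} :
    p ∈ ins Γ l ↔ p.1 ∈ Γ.A ∧ p.1 ∉ fsts l ∧ ((cnt l p.2 : ℕ∞) < Γ.β p.2) ∧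
      ∀ q ∈ l.getLast?, NA q p := by
  simp [ins]

noncomputable def m1 (s : Finset (Letter n k)) (h : s.Nonempty) : Fin n :=
  (s.image Prod.fst).min' (h.image _)

lemma filt_ne (s : Finset (Letter n k)) (h : s.Nonempty) :
    ((s.filter fun p => p.1 = m1 s h).image Prod.snd).Nonempty := by
  obtain ⟨p, hp, hp2⟩ := Finset.mem_image.1 ((s.image Prod.fst).min'_mem (h.image _))
  exact ⟨p.2, Finset.mem_image.2 ⟨p, Finset.mem_filter.2 ⟨hp, hp2⟩, rfl⟩⟩

noncomputable def pmin (s : Finset (Letter n k)) (h : s.Nonempty) : Letter n k :=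
  ⟨m1 s h, ((s.filter fun p => p.1 = m1 s h).image Prod.snd).min' (by exact filt_ne s h)⟩

lemma pmin_mem (s : Finset (Letter n k)) (h : s.Nonempty) : pmin s h ∈ s := by
  have h2 := ((s.filter fun p => p.1 = m1 s h).image Prod.snd).min'_mem (by exact filt_ne s h)
  obtain ⟨p, hp, hp2⟩ := Finset.mem_image.1 h2
  obtain ⟨hps, hp1⟩ := Finset.mem_filter.1 hp
  have : pmin s h = p := Prod.ext hp1.symm hp2.symm
  rw [this]; exact hps

lemma pmin_fst_le {s : Finset (Letter n k)} (h : s.Nonempty) {p : Letter n k} (hp : p ∈ s) :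
    (pmin s h).1 ≤ p.1 :=
  Finset.min'_le _ _ (Finset.mem_image.2 ⟨p, hp, rfl⟩)

lemma pmin_snd_le {s : Finset (Letter n k)} (h : s.Nonempty) {c : Fin k}
    (hc : ((pmin s h).1, c) ∈ s) : (pmin s h).2 ≤ c := by
  show ((s.filter fun p => p.1 = m1 s h).image Prod.snd).min' (by exact filt_ne s h) ≤ c
  apply Finset.min'_le
  exact Finset.mem_image.2 ⟨((pmin s h).1, c), Finset.mem_filter.2 ⟨hc, rfl⟩, rfl⟩

lemma cnt_append (l : List (Letter n k)) (p : Letter n k) (c : Fin k) :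
    cnt (l ++ [p]) c = cnt l c + if p.2 = c then 1 else 0 := by
  simp only [cnt, List.map_append, List.map_cons, List.map_nil, List.count_append]
  by_cases h : p.2 = c
  · simp [List.count_singleton, h]
  · simp only [List.count_singleton, if_neg h]
    simp [beq_iff_eq]
    intro hc; exact absurd hc h

lemma fsts_append (l : List (Letter n k)) (p : Letter n k) :
    fsts (l ++ [p]) = fsts l ++ [p.1] := by simp [fsts]

lemma append_ok {Γ : Ctx n k} {l : List (Letter n k)} {p : Letter n k}
    (hOK : OK l) (hp : p ∈ ins Γ l) : OK (l ++ [p]) := by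
  obtain ⟨h1, h2, h3, h4⟩ := mem_ins.1 hp
  constructor
  · show List.IsChain NA (l ++ [p]); rw [List.isChain_append]
    exact ⟨hOK.1, List.isChain_singleton _, fun x hx y hy => by
      simp at hy; subst hy; exact h4 x hx⟩
  · rw [fsts_append]
    simp [List.nodup_append, hOK.2, h2]
    exact fun a ha h => h2 (h ▸ ha)

lemma append_mem {Γ : Ctx n k} {l : List (Letter n k)} {p : Letter n k}
    (hm : memC Γ l) (hp : p ∈ ins Γ l) : memC Γ (l ++ [p]) := by
  obtain ⟨h1, h2, h3, h4⟩ := mem_ins.1 hp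
  constructor
  · intro q hq
    rcases List.mem_append.1 hq with h | h
    · exact hm.1 q h
    · simp at h; subst h; exact h1
  · intro c
    rw [cnt_append]
    by_cases hc : p.2 = c
    · subst hc
      simp only [if_pos rfl]
      push_cast
      exact Order.add_one_le_of_lt h3
    · simp only [if_neg hc, add_zero]
      exact hm.2 c

lemma init_ok {l : List (Letter n k)} {p : Letter n k} (h : OK (l ++ [p])) : OK l :=
  ⟨h.1.prefix ⟨[p], rfl⟩, (by
    have := h.2
    rw [fsts_append] at this
    exact (List.nodup_append.1 this).1)⟩

lemma init_mem {Γ : Ctx n k} {l : List (Letter n k)} {p : Letter n k}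
    (h : memC Γ (l ++ [p])) : memC Γ l := by
  constructor
  · exact fun q hq => h.1 q (List.mem_append.2 (Or.inl hq))
  · intro c
    refine le_trans ?_ (h.2 c)
    have : cnt l c ≤ cnt (l ++ [p]) c := by
      rw [cnt_append]; omega
    exact_mod_cast this

lemma last_mem_ins {Γ : Ctx n k} {l : List (Letter n k)} {p : Letter n k}
    (hOK : OK (l ++ [p])) (hm : memC Γ (l ++ [p])) : p ∈ ins Γ l := by
  refine mem_ins.2 ⟨hm.1 p (by simp), ?_, ?_, ?_⟩
  · have := hOK.2
    rw [fsts_append] at this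
    have := List.nodup_append.1 this
    intro hc
    exact this.2.2 _ hc _ (by simp) rfl
  · have h2 := hm.2 p.2
    rw [cnt_append, if_pos rfl] at h2
    push_cast at h2
    exact lt_of_lt_of_le (by exact_mod_cast Nat.lt_succ_self _) h2
  · have := (List.isChain_append.1 hOK.1).2.2
    intro q hq
    exact this q hq p (by simp)

/-- K2 : after appending the canonical letter, nothing can be appended. -/
lemma ins_append_pmin_eq_empty {Γ : Ctx n k} {l : List (Letter n k)}
    (hne : (ins Γ l).Nonempty) :
    ins Γ (l ++ [pmin (ins Γ l) hne]) = ∅ := by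
  set p := pmin (ins Γ l) hne with hp
  have hpins : p ∈ ins Γ l := pmin_mem _ _
  obtain ⟨hpA, hpf, hpb, hpleg⟩ := mem_ins.1 hpins
  rw [Finset.eq_empty_iff_forall_notMem]
  rintro ⟨x, c⟩ hx
  obtain ⟨hA, hf, hb, hleg⟩ := mem_ins.1 hx
  have hlast : (l ++ [p]).getLast? = some p := by
    rw [List.getLast?_eq_getLast (by simp), List.getLast_concat]
  have hNA : NA p (x, c) := hleg p (by rw [hlast]; exact rfl)
  have hxne : x ≠ p.1 := by
    intro h; apply hf; rw [fsts_append, h]; simp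
  have hxf : x ∉ fsts l := by
    intro h; apply hf; rw [fsts_append]; simp [h]
  rcases lt_or_gt_of_ne hxne with hlt | hgt
  · -- x < p.1 : then (x, p.2) ∈ ins Γ l, contradicting minimality of fst
    have : (x, p.2) ∈ ins Γ l := by
      refine mem_ins.2 ⟨hA, hxf, hpb, ?_⟩
      intro q hq
      intro ⟨hq1, hq2⟩
      exact hpleg q hq ⟨lt_trans hq1 hlt, hq2⟩
    have := pmin_fst_le hne this
    rw [← hp] at this
    exact absurd hlt (not_lt.2 this)
  · -- p.1 < x : legality forces c < p.2, then (p.1, c) ∈ ins Γ l contradicts snd minimality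
    have hc : c < p.2 := by
      by_contra hc
      exact hNA ⟨hgt, not_lt.1 hc⟩
    have hcb : (cnt l c : ℕ∞) < Γ.β c := by
      have : cnt (l ++ [p]) c = cnt l c := by
        rw [cnt_append, if_neg (by exact fun h => absurd h (ne_of_gt hc)), add_zero]
      rwa [this] at hb
    have : (p.1, c) ∈ ins Γ l := by
      refine mem_ins.2 ⟨hpA, hpf, hcb, ?_⟩
      intro q hq
      intro ⟨hq1, hq2⟩
      exact hpleg q hq ⟨hq1, le_trans hq2 (le_of_lt hc)⟩
    exact absurd (pmin_snd_le hne (by exact this)) (not_le.2 hc)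

lemma sum_cnt (l : List (Letter n k)) : ∑ c : Fin k, cnt l c = l.length := by
  induction l with
  | nil => simp [cnt]
  | cons p l ih =>
    have : ∀ c, cnt (p :: l) c = (if p.2 = c then 1 else 0) + cnt l c := by
      intro c
      simp only [cnt, List.map_cons, List.count_cons, beq_iff_eq]
      by_cases h : p.2 = c <;> simp [h] <;> omega
    simp only [this, Finset.sum_add_distrib, ih]
    simp [List.length_cons]
    omega

lemma sum_count_univ (ν : Multiset (Fin k)) : ∑ c : Fin k, ν.count c = Multiset.card ν := by
  rw [← Multiset.toFinset_sum_count_eq ν]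
  symm
  apply Finset.sum_subset (Finset.subset_univ _)
  intro c _ hc
  simpa [Multiset.count_eq_zero] using fun h => hc (Multiset.mem_toFinset.2 h)

/-- `l` is removable : its last letter is the canonical insertion of its prefix. -/
def Rem (Γ : Ctx n k) (l : List (Letter n k)) : Prop :=
  ∃ _h0 : l ≠ [], ∃ hne : (ins Γ l.dropLast).Nonempty,
    l.getLast ‹l ≠ []› = pmin (ins Γ l.dropLast) hne

lemma getLast?_concat' (l : List (Letter n k)) (p : Letter n k) :
    (l ++ [p]).getLast? = some p := by
  rw [List.getLast?_eq_getLast (by simp), List.getLast_concat]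

lemma rem_concat {Γ : Ctx n k} {l : List (Letter n k)} {p : Letter n k}
    (hne : (ins Γ l).Nonempty) (hp : p = pmin (ins Γ l) hne) : Rem Γ (l ++ [p]) := by
  refine ⟨by simp, ?_⟩
  rw [List.dropLast_concat]
  exact ⟨hne, by rw [List.getLast_concat]; exact hp⟩

lemma rem_iff_concat {Γ : Ctx n k} {l : List (Letter n k)} {p : Letter n k} :
    Rem Γ (l ++ [p]) ↔ ∃ hne : (ins Γ l).Nonempty, p = pmin (ins Γ l) hne := by
  constructor
  · rintro ⟨h0, hne, hp⟩
    rw [List.dropLast_concat] at hne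
    refine ⟨hne, ?_⟩
    rw [List.getLast_concat] at hp
    rw [hp]
    congr 1; simp only [List.dropLast_concat]
  · rintro ⟨hne, hp⟩
    exact rem_concat hne hp

lemma ne_nil_exists_concat {l : List (Letter n k)} (h : l ≠ []) :
    ∃ l' p, l = l' ++ [p] :=
  ⟨l.dropLast, l.getLast h, (List.dropLast_append_getLast h).symm⟩

/-- K3a : exact budget; a stuck word is removable. -/
lemma stuck_rem {Γ : Ctx n k} {ν : Multiset (Fin k)}
    (hβ : ∀ c, Γ.β c = (ν.count c : ℕ∞)) (hν : Multiset.card ν = Γ.A.card)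
    (hA : Γ.A.Nonempty) {l : List (Letter n k)} (hOK : OK l) (hm : memC Γ l)
    (hins : ins Γ l = ∅) : Rem Γ l := by
  have hBA : ∀ x ∈ fsts l, x ∈ Γ.A := by
    intro x hx
    obtain ⟨p, hp, rfl⟩ := List.mem_map.1 hx
    exact hm.1 p hp
  have hcnt : ∀ c, cnt l c ≤ ν.count c := by
    intro c
    have := hm.2 c
    rw [hβ c] at this
    exact_mod_cast this
  have hlenB : (fsts l).toFinset.card = l.length := by
    rw [List.toFinset_card_of_nodup hOK.2, fsts, List.length_map]
  have hBsub : (fsts l).toFinset ⊆ Γ.A := fun x hx => hBA x (List.mem_toFinset.1 hx)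
  by_cases hAB : ∀ x ∈ Γ.A, x ∈ fsts l
  · -- carrier full
    have hBeq : (fsts l).toFinset = Γ.A :=
      Finset.Subset.antisymm hBsub (fun x hx => List.mem_toFinset.2 (hAB x hx))
    have hlen : l.length = Γ.A.card := by rw [← hBeq, hlenB]
    have h0 : l ≠ [] := by
      intro h
      rw [h] at hlen
      simp at hlen
      exact Finset.Nonempty.ne_empty hA (Finset.card_eq_zero.1 hlen.symm)
    have hcnteq : ∀ c, cnt l c = ν.count c := by
      have hsums : ∑ c : Fin k, cnt l c = ∑ c : Fin k, ν.count c := by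
        rw [sum_cnt, sum_count_univ, hν, hlen]
      intro c
      exact (Finset.sum_eq_sum_iff_of_le (fun i _ => hcnt i)).1 hsums c (Finset.mem_univ c)
    obtain ⟨l', p, rfl⟩ := ne_nil_exists_concat h0
    have hpins : p ∈ ins Γ l' := last_mem_ins hOK hm
    have hne : (ins Γ l').Nonempty := ⟨p, hpins⟩
    refine rem_iff_concat.2 ⟨hne, ?_⟩
    have huniq : ∀ q ∈ ins Γ l', q = p := by
      rintro ⟨x, c⟩ hx
      obtain ⟨h1, h2, h3, h4⟩ := mem_ins.1 hx
      have hx1 : x = p.1 := by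
        by_contra hne'
        have : x ∈ fsts (l' ++ [p]) := hAB x h1
        rw [fsts_append] at this
        rcases List.mem_append.1 this with h | h
        · exact h2 h
        · simp at h; exact hne' h
      have hc : c = p.2 := by
        by_contra hne'
        have he : cnt l' c = cnt (l' ++ [p]) c := by
          rw [cnt_append, if_neg (fun h => hne' h.symm), add_zero]
        rw [he, hcnteq c, hβ c] at h3
        exact absurd h3 (lt_irrefl _)
      exact Prod.ext hx1 hc
    exact (huniq _ (pmin_mem (ins Γ l') hne)).symm
  · -- there is an available element
    push_neg at hAB
    obtain ⟨a, haA, haB⟩ := hAB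
    have h0 : l ≠ [] := by
      intro h
      subst h
      obtain ⟨c, hc⟩ : ∃ c, 0 < ν.count c := by
        have : ν ≠ 0 := by
          intro h
          rw [h] at hν
          simp at hν
          exact Finset.Nonempty.ne_empty hA (Finset.card_eq_zero.1 hν.symm)
        obtain ⟨c, hc⟩ := Multiset.exists_mem_of_ne_zero this
        exact ⟨c, Multiset.count_pos.2 hc⟩
      have : (a, c) ∈ ins Γ [] := by
        refine mem_ins.2 ⟨haA, by simp [fsts], ?_, by simp⟩
        rw [hβ c]
        simpa [cnt] using by exact_mod_cast hc
      rw [hins] at this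
      exact absurd this (Finset.notMem_empty _)
    obtain ⟨l', p, hlp⟩ := ne_nil_exists_concat h0
    subst hlp
    have hlast : (l' ++ [p]).getLast? = some p := getLast?_concat' l' p
    have key : ∀ x, x ∈ Γ.A → x ∉ fsts (l' ++ [p]) → ∀ c, cnt (l' ++ [p]) c < ν.count c →
        p.1 < x ∧ p.2 ≤ c := by
      intro x hx hxf c hc
      have hni : (x, c) ∉ ins Γ (l' ++ [p]) := by rw [hins]; exact Finset.notMem_empty _
      rw [mem_ins] at hni
      push_neg at hni
      obtain ⟨q, hq, hq2⟩ := hni hx hxf (by rw [hβ c]; exact_mod_cast hc)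
      rw [hlast] at hq
      simp at hq
      subst hq
      unfold NA at hq2
      push_neg at hq2
      exact hq2
    obtain ⟨c₀, hc₀⟩ : ∃ c, cnt (l' ++ [p]) c < ν.count c := by
      by_contra hcon
      push_neg at hcon
      have heq : ∀ c, cnt (l' ++ [p]) c = ν.count c := fun c => le_antisymm (hcnt c) (hcon c)
      have hll : (l' ++ [p]).length = Multiset.card ν := by
        rw [← sum_cnt, ← sum_count_univ]
        exact Finset.sum_congr rfl fun c _ => heq c
      have hlt : (fsts (l' ++ [p])).toFinset.card < Γ.A.card :=
        Finset.card_lt_card (Finset.ssubset_iff_of_subset hBsub |>.2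
          ⟨a, haA, fun h => haB (List.mem_toFinset.1 h)⟩)
      rw [hlenB, hll, hν] at hlt
      exact lt_irrefl _ hlt
    have hpins : p ∈ ins Γ l' := last_mem_ins hOK hm
    have hne : (ins Γ l').Nonempty := ⟨p, hpins⟩
    refine rem_iff_concat.2 ⟨hne, ?_⟩
    have hfst : (pmin (ins Γ l') hne).1 = p.1 := by
      apply le_antisymm (pmin_fst_le hne hpins)
      have hq := pmin_mem (ins Γ l') hne
      obtain ⟨h1, h2, h3, h4⟩ := mem_ins.1 hq
      by_cases hx : (pmin (ins Γ l') hne).1 = p.1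
      · rw [hx]
      · have hxf : (pmin (ins Γ l') hne).1 ∉ fsts (l' ++ [p]) := by
          rw [fsts_append]
          intro hmem
          rcases List.mem_append.1 hmem with h | h
          · exact h2 h
          · simp at h; exact hx h
        exact le_of_lt (key _ h1 hxf c₀ hc₀).1
    have hsnd : (pmin (ins Γ l') hne).2 = p.2 := by
      apply le_antisymm
      · apply pmin_snd_le hne
        rw [hfst]
        exact hpins
      · have hq := pmin_mem (ins Γ l') hne
        obtain ⟨h1, h2, h3, h4⟩ := mem_ins.1 hq
        set c₁ := (pmin (ins Γ l') hne).2 with hc₁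
        by_cases hc : c₁ = p.2
        · rw [hc]
        · have hcc : cnt (l' ++ [p]) c₁ < ν.count c₁ := by
            have he : cnt (l' ++ [p]) c₁ = cnt l' c₁ := by
              rw [cnt_append, if_neg (fun h => hc h.symm), add_zero]
            rw [he]
            rw [hβ c₁] at h3
            exact_mod_cast h3
          exact (key a haA haB c₁ hcc).2
    exact (Prod.ext hfst hsnd).symm

def Γtop (n k : ℕ) : Ctx n k := ⟨Finset.univ, fun _ => ⊤⟩

lemma memC_top (l : List (Letter n k)) : memC (Γtop n k) l :=
  ⟨fun _ _ => Finset.mem_univ _, fun c => le_top⟩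

def Fixd (n : ℕ) {k : ℕ} (l : List (Letter n k)) : Prop :=
  l.length = n ∧ ∀ p ∈ l.getLast?, (p.2 : Fin k).val ≠ 0

/-- K3b : unlimited budget; a stuck word is fixed or removable. -/
lemma stuck_rem_top (hn : 0 < n) (hk : 0 < k) {l : List (Letter n k)} (hOK : OK l)
    (hins : ins (Γtop n k) l = ∅) : Fixd n l ∨ Rem (Γtop n k) l := by
  have hβ : ∀ c : Fin k, (Γtop n k).β c = ⊤ := fun _ => rfl
  by_cases hAB : ∀ x : Fin n, x ∈ fsts l
  · -- full word
    have hlen : l.length = n := by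
      have h1 : (fsts l).toFinset = Finset.univ :=
        Finset.eq_univ_of_forall (fun x => List.mem_toFinset.2 (hAB x))
      have h2 : (fsts l).toFinset.card = l.length := by
        rw [List.toFinset_card_of_nodup hOK.2, fsts, List.length_map]
      rw [← h2, h1, Finset.card_univ, Fintype.card_fin]
    have h0 : l ≠ [] := by
      intro h; rw [h] at hlen; simp at hlen; omega
    obtain ⟨l', p, hlp⟩ := ne_nil_exists_concat h0
    subst hlp
    by_cases hp2 : (p.2 : Fin k).val = 0
    · right
      have hpins : p ∈ ins (Γtop n k) l' := last_mem_ins hOK (memC_top _)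
      have hne : (ins (Γtop n k) l').Nonempty := ⟨p, hpins⟩
      refine rem_iff_concat.2 ⟨hne, ?_⟩
      have hfst : (pmin (ins (Γtop n k) l') hne).1 = p.1 := by
        apply le_antisymm (pmin_fst_le hne hpins)
        have hq := pmin_mem (ins (Γtop n k) l') hne
        obtain ⟨h1, h2, h3, h4⟩ := mem_ins.1 hq
        by_cases hx : (pmin (ins (Γtop n k) l') hne).1 = p.1
        · rw [hx]
        · exfalso
          have : (pmin (ins (Γtop n k) l') hne).1 ∈ fsts (l' ++ [p]) := hAB _
          rw [fsts_append] at this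
          rcases List.mem_append.1 this with h | h
          · exact h2 h
          · simp at h; exact hx h
      have hsnd : (pmin (ins (Γtop n k) l') hne).2 = p.2 := by
        apply le_antisymm
        · apply pmin_snd_le hne
          rw [hfst]; exact hpins
        · exact Fin.le_def.2 (by omega)
      exact (Prod.ext hfst hsnd).symm
    · left
      refine ⟨hlen, ?_⟩
      intro q hq
      rw [getLast?_concat'] at hq
      simp at hq
      subst hq
      exact hp2
  · push_neg at hAB
    obtain ⟨a, haB⟩ := hAB
    have h0 : l ≠ [] := by
      intro h
      subst h
      have : (a, ⟨0, hk⟩) ∈ ins (Γtop n k) [] := by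
        refine mem_ins.2 ⟨Finset.mem_univ _, by simpa [fsts] using haB, ?_, by simp⟩
        rw [hβ]
        exact ENat.coe_lt_top _
      rw [hins] at this
      exact absurd this (Finset.notMem_empty _)
    right
    obtain ⟨l', p, hlp⟩ := ne_nil_exists_concat h0
    subst hlp
    have hlast : (l' ++ [p]).getLast? = some p := getLast?_concat' l' p
    have key : ∀ x : Fin n, x ∉ fsts (l' ++ [p]) → ∀ c : Fin k,
        p.1 < x ∧ p.2 ≤ c := by
      intro x hxf c
      have hni : (x, c) ∉ ins (Γtop n k) (l' ++ [p]) := by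
        rw [hins]; exact Finset.notMem_empty _
      rw [mem_ins] at hni
      push_neg at hni
      obtain ⟨q, hq, hq2⟩ := hni (Finset.mem_univ _) hxf (by rw [hβ]; exact ENat.coe_lt_top _)
      rw [hlast] at hq
      simp at hq
      subst hq
      unfold NA at hq2
      push_neg at hq2
      exact hq2
    have hp2 : p.2 = ⟨0, hk⟩ := le_antisymm ((key a haB ⟨0, hk⟩).2) (Fin.le_def.2 (by simp))
    have hpins : p ∈ ins (Γtop n k) l' := last_mem_ins hOK (memC_top _)
    have hne : (ins (Γtop n k) l').Nonempty := ⟨p, hpins⟩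
    refine rem_iff_concat.2 ⟨hne, ?_⟩
    have hfst : (pmin (ins (Γtop n k) l') hne).1 = p.1 := by
      apply le_antisymm (pmin_fst_le hne hpins)
      have hq := pmin_mem (ins (Γtop n k) l') hne
      obtain ⟨h1, h2, h3, h4⟩ := mem_ins.1 hq
      by_cases hx : (pmin (ins (Γtop n k) l') hne).1 = p.1
      · rw [hx]
      · have hxf : (pmin (ins (Γtop n k) l') hne).1 ∉ fsts (l' ++ [p]) := by
          rw [fsts_append]
          intro hmem
          rcases List.mem_append.1 hmem with h | h
          · exact h2 h
          · simp at h; exact hx h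
        exact le_of_lt (key _ hxf ⟨0, hk⟩).1
    have hsnd : (pmin (ins (Γtop n k) l') hne).2 = p.2 := by
      apply le_antisymm
      · apply pmin_snd_le hne
        rw [hfst]; exact hpins
      · rw [hp2]
        exact Fin.le_def.2 (by simp)
    exact (Prod.ext hfst hsnd).symm

noncomputable def Phi (Γ : Ctx n k) (l : List (Letter n k)) : List (Letter n k) :=
  if Rem Γ l then l.dropLast
  else if h : (ins Γ l).Nonempty then l ++ [pmin (ins Γ l) h] else l

lemma rem_ins_empty {Γ : Ctx n k} {l : List (Letter n k)} (h : Rem Γ l) : ins Γ l = ∅ := by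
  obtain ⟨h0, hne, hp⟩ := h
  have := ins_append_pmin_eq_empty hne
  rw [← hp, List.dropLast_append_getLast h0] at this
  exact this

lemma dropLast_ok {l : List (Letter n k)} (h : OK l) : OK l.dropLast :=
  ⟨h.1.prefix (List.dropLast_prefix l),
   h.2.sublist (List.Sublist.map Prod.fst (List.dropLast_sublist l))⟩

lemma dropLast_mem {Γ : Ctx n k} {l : List (Letter n k)} (h : memC Γ l) : memC Γ l.dropLast := by
  constructor
  · exact fun p hp => h.1 p ((List.dropLast_sublist l).mem hp)
  · intro c
    refine le_trans ?_ (h.2 c)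
    have : cnt l.dropLast c ≤ cnt l c :=
      List.Sublist.count_le c (List.Sublist.map Prod.snd (List.dropLast_sublist l))
    exact_mod_cast this

lemma phi_spec {Γ : Ctx n k} {l : List (Letter n k)} (hOK : OK l) (hm : memC Γ l)
    (hR : Rem Γ l ∨ (ins Γ l).Nonempty) :
    OK (Phi Γ l) ∧ memC Γ (Phi Γ l) ∧
    (Phi Γ l).length + 1 = l.length ∨
      OK (Phi Γ l) ∧ memC Γ (Phi Γ l) ∧ l.length + 1 = (Phi Γ l).length := by
  by_cases h : Rem Γ l
  · left
    rw [Phi, if_pos h]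
    obtain ⟨h0, hne, hp⟩ := h
    refine ⟨dropLast_ok hOK, dropLast_mem hm, ?_⟩
    rw [List.length_dropLast]
    have : 0 < l.length := List.length_pos_iff.2 h0
    omega
  · right
    rcases hR with hR | hne
    · exact absurd hR h
    rw [Phi, if_neg h, dif_pos hne]
    exact ⟨append_ok hOK (pmin_mem _ hne), append_mem hm (pmin_mem _ hne), by simp⟩

lemma phi_phi {Γ : Ctx n k} {l : List (Letter n k)}
    (hR : Rem Γ l ∨ (ins Γ l).Nonempty) : Phi Γ (Phi Γ l) = l := by
  by_cases h : Rem Γ l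
  · have hPhi : Phi Γ l = l.dropLast := by rw [Phi, if_pos h]
    obtain ⟨h0, hne, hp⟩ := h
    have hnotrem : ¬ Rem Γ l.dropLast := by
      intro hrem
      have := rem_ins_empty hrem
      rw [this] at hne
      exact Finset.not_nonempty_empty hne
    rw [hPhi, Phi, if_neg hnotrem, dif_pos hne, ← hp, List.dropLast_append_getLast h0]
  · rcases hR with hR | hne
    · exact absurd hR h
    have hPhi : Phi Γ l = l ++ [pmin (ins Γ l) hne] := by rw [Phi, if_neg h, dif_pos hne]
    have hrem : Rem Γ (l ++ [pmin (ins Γ l) hne]) := rem_concat hne rfl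
    rw [hPhi, Phi, if_pos hrem, List.dropLast_concat]

lemma phi_rem_or_ins {Γ : Ctx n k} {l : List (Letter n k)}
    (hR : Rem Γ l ∨ (ins Γ l).Nonempty) :
    Rem Γ (Phi Γ l) ∨ (ins Γ (Phi Γ l)).Nonempty := by
  by_cases h : Rem Γ l
  · rw [Phi, if_pos h]
    obtain ⟨h0, hne, hp⟩ := h
    exact Or.inr hne
  · rcases hR with hR | hne
    · exact absurd hR h
    rw [Phi, if_neg h, dif_pos hne]
    exact Or.inl (rem_concat hne rfl)

lemma phi_len_ne {Γ : Ctx n k} {l : List (Letter n k)} (hOK : OK l) (hm : memC Γ l)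
    (hR : Rem Γ l ∨ (ins Γ l).Nonempty) : (Phi Γ l).length ≠ l.length := by
  rcases phi_spec hOK hm hR with ⟨_, _, h⟩ | ⟨_, _, h⟩ <;> omega

lemma pmin_snd_zero_top {l : List (Letter n k)} (hk : 0 < k)
    (hne : (ins (Γtop n k) l).Nonempty) : ((pmin (ins (Γtop n k) l) hne).2).val = 0 := by
  set p := pmin (ins (Γtop n k) l) hne with hp
  have hpins : p ∈ ins (Γtop n k) l := pmin_mem _ _
  obtain ⟨h1, h2, h3, h4⟩ := mem_ins.1 hpins
  have : (p.1, (⟨0, hk⟩ : Fin k)) ∈ ins (Γtop n k) l := by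
    refine mem_ins.2 ⟨h1, h2, ?_, ?_⟩
    · exact ENat.coe_lt_top _
    · intro q hq
      intro ⟨ha, hb⟩
      exact h4 q hq ⟨ha, le_trans hb (Fin.le_def.2 (by simp))⟩
  have hle := Fin.le_def.1 (pmin_snd_le hne (by exact this))
  simpa using hle

def Words (n k : ℕ) := {l : List (Letter n k) // OK l}

lemma words_len_le (w : Words n k) : w.1.length ≤ n := by
  have := w.2.2.length_le_card
  simpa [fsts] using this

noncomputable instance : Fintype (Words n k) := by
  apply Fintype.ofInjective (fun w : Words n k => (fun i : Fin n => w.1[i.val]?))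
  intro w1 w2 h
  apply Subtype.ext
  apply List.ext_getElem?
  intro i
  by_cases hi : i < n
  · exact congrFun h ⟨i, hi⟩
  · rw [List.getElem?_eq_none, List.getElem?_eq_none]
    · exact le_trans (words_len_le w2) (by omega)
    · exact le_trans (words_len_le w1) (by omega)

noncomputable instance : Fintype (WSubK n k) := by
  apply Fintype.ofInjective
    (fun x : WSubK n k => ((x.carrier, fun c => (⟨x.wt.count c, by
      have h1 : x.wt.count c ≤ Multiset.card x.wt := Multiset.count_le_card c x.wt
      have h2 : x.carrier.card ≤ n := le_trans (Finset.card_le_univ _) (by simp)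
      have h3 := x.card_eq
      omega⟩ : Fin (n + 1))) : Finset (Fin n) × (Fin k → Fin (n + 1))))
  intro x y h
  rw [Prod.mk.injEq] at h
  apply WSubK.ext h.1
  refine Multiset.ext.2 fun c => ?_
  have := congrFun h.2 c
  exact congrArg Fin.val this

noncomputable def pr (w : Words n k) : WSubK n k :=
  ⟨(fsts w.1).toFinset, (w.1.map Prod.snd : Multiset (Fin k)), by
    rw [Multiset.coe_card, List.length_map, List.toFinset_card_of_nodup w.2.2, fsts,
      List.length_map]⟩

noncomputable def gfun (x : WSubK n k) : ℤ :=
  (-1) ^ (x.carrier.card) * ((Finset.univ.filter fun w : Words n k => pr w = x).card : ℤ)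

def Γof (x : WSubK n k) : Ctx n k := ⟨x.carrier, fun c => (x.wt.count c : ℕ∞)⟩

lemma pr_le_iff (w : Words n k) (x : WSubK n k) : pr w ≤ x ↔ memC (Γof x) w.1 := by
  show ((fsts w.1).toFinset ⊆ x.carrier ∧ (w.1.map Prod.snd : Multiset (Fin k)) ≤ x.wt) ↔ _
  constructor
  · rintro ⟨h1, h2⟩
    constructor
    · intro p hp
      exact h1 (List.mem_toFinset.2 (List.mem_map.2 ⟨p, hp, rfl⟩))
    · intro c
      have := Multiset.le_iff_count.1 h2 c
      rw [Multiset.coe_count] at this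
      show ((cnt w.1 c : ℕ) : ℕ∞) ≤ ((x.wt.count c : ℕ) : ℕ∞)
      exact_mod_cast this
  · rintro ⟨h1, h2⟩
    constructor
    · intro a ha
      obtain ⟨p, hp, rfl⟩ := List.mem_map.1 (List.mem_toFinset.1 ha)
      exact h1 p hp
    · refine Multiset.le_iff_count.2 fun c => ?_
      rw [Multiset.coe_count]
      have := h2 c
      simp only [Γof] at this
      exact_mod_cast this

/-- signed sum over a down-set of words is 0, given closure and totality of Φ. -/
lemma involution_sum {Γ : Ctx n k} (s : Finset (Words n k))
    (hmem : ∀ w : Words n k, w ∈ s → memC Γ w.1)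
    (hclosed : ∀ w : Words n k, w ∈ s → ∀ (h : OK (Phi Γ w.1)),
        (⟨Phi Γ w.1, h⟩ : Words n k) ∈ s)
    (hRi : ∀ w : Words n k, w ∈ s → Rem Γ w.1 ∨ (ins Γ w.1).Nonempty) :
    ∑ w ∈ s, (-1 : ℤ) ^ w.1.length = 0 := by
  have hok : ∀ w : Words n k, w ∈ s → OK (Phi Γ w.1) := by
    intro w hw
    rcases phi_spec w.2 (hmem w hw) (hRi w hw) with ⟨h, _, _⟩ | ⟨h, _, _⟩ <;> exact h
  apply Finset.sum_involution (fun w hw => (⟨Phi Γ w.1, hok w hw⟩ : Words n k))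
  · intro w hw
    rcases phi_spec w.2 (hmem w hw) (hRi w hw) with ⟨_, _, h⟩ | ⟨_, _, h⟩
    · show (-1 : ℤ) ^ w.1.length + (-1) ^ (Phi Γ w.1).length = 0
      rw [← h, pow_succ]
      ring
    · show (-1 : ℤ) ^ w.1.length + (-1) ^ (Phi Γ w.1).length = 0
      rw [← h, pow_succ]
      ring
  · intro w hw _
    intro hcon
    have := congrArg (fun u : Words n k => u.1.length) hcon
    exact phi_len_ne w.2 (hmem w hw) (hRi w hw) this
  · intro w hw
    apply Subtype.ext
    show Phi Γ (Phi Γ w.1) = w.1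
    exact phi_phi (hRi w hw)
  · intro w hw
    exact hclosed w hw _

lemma pr_card (w : Words n k) : (pr w).carrier.card = w.1.length := by
  show (fsts w.1).toFinset.card = _
  rw [List.toFinset_card_of_nodup w.2.2, fsts, List.length_map]

lemma fiber_sum (t : Finset (WSubK n k)) (s : Finset (Words n k))
    (hst : ∀ w ∈ s, pr w ∈ t) (hts : ∀ w : Words n k, pr w ∈ t → w ∈ s) :
    ∑ z ∈ t, gfun z = ∑ w ∈ s, (-1 : ℤ) ^ w.1.length := by
  rw [← Finset.sum_fiberwise_of_maps_to hst (fun w : Words n k => (-1 : ℤ) ^ w.1.length)]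
  apply Finset.sum_congr rfl
  intro z hz
  have hfil : s.filter (fun w => pr w = z) = Finset.univ.filter (fun w : Words n k => pr w = z) := by
    ext w
    simp only [Finset.mem_filter, Finset.mem_univ, true_and]
    exact ⟨fun h => h.2, fun h => ⟨hts w (h ▸ hz), h⟩⟩
  rw [hfil]
  have hconst : ∑ w ∈ Finset.univ.filter (fun w : Words n k => pr w = z), (-1 : ℤ) ^ w.1.length
      = ∑ _w ∈ Finset.univ.filter (fun w : Words n k => pr w = z),
          (-1 : ℤ) ^ z.carrier.card := by
    apply Finset.sum_congr rfl
    intro w hw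
    have := (Finset.mem_filter.1 hw).2
    rw [← this, pr_card]
  rw [hconst, Finset.sum_const, nsmul_eq_mul, gfun]
  ring

lemma hR_of (x : WSubK n k) (hx : x.carrier.Nonempty) (w : Words n k)
    (hm : memC (Γof x) w.1) : Rem (Γof x) w.1 ∨ (ins (Γof x) w.1).Nonempty := by
  by_cases hne : (ins (Γof x) w.1).Nonempty
  · exact Or.inr hne
  · left
    apply stuck_rem (ν := x.wt) (fun c => rfl) x.card_eq hx w.2 hm
    exact Finset.not_nonempty_iff_eq_empty.1 hne

lemma interval_sum (x : WSubK n k) (hx : x.carrier.Nonempty) :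
    ∑ z ∈ Finset.univ.filter (· ≤ x), gfun z = 0 := by
  rw [fiber_sum (Finset.univ.filter (· ≤ x)) (Finset.univ.filter fun w : Words n k => pr w ≤ x)
    (fun w hw => by
      simp only [Finset.mem_filter, Finset.mem_univ, true_and] at hw ⊢
      exact hw)
    (fun w hw => by
      simp only [Finset.mem_filter, Finset.mem_univ, true_and] at hw ⊢
      exact hw)]
  apply involution_sum (Γ := Γof x)
  · intro w hw
    simp only [Finset.mem_filter, Finset.mem_univ, true_and] at hw
    exact (pr_le_iff w x).1 hw
  · intro w hw hOK
    simp only [Finset.mem_filter, Finset.mem_univ, true_and] at hw ⊢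
    have hm := (pr_le_iff w x).1 hw
    refine Finset.mem_filter.2 ⟨Finset.mem_univ (α := Words n k) _, (pr_le_iff _ x).2 ?_⟩
    rcases phi_spec w.2 hm (hR_of x hx w hm) with ⟨_, h, _⟩ | ⟨_, h, _⟩ <;> exact h
  · intro w hw
    simp only [Finset.mem_filter, Finset.mem_univ, true_and] at hw
    exact hR_of x hx w ((pr_le_iff w x).1 hw)

lemma phi_not_fixd (hn : 0 < n) (hk : 0 < k) {l : List (Letter n k)} (hOK : OK l)
    (hlen : l.length ≤ n)
    (hR : Rem (Γtop n k) l ∨ (ins (Γtop n k) l).Nonempty) : ¬ Fixd n (Phi (Γtop n k) l) := by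
  by_cases h : Rem (Γtop n k) l
  · have hPhi : Phi (Γtop n k) l = l.dropLast := by rw [Phi, if_pos h]
    obtain ⟨h0, _, _⟩ := h
    intro hF
    have := hF.1
    rw [hPhi, List.length_dropLast] at this
    have : 0 < l.length := List.length_pos_iff.2 h0
    omega
  · rcases hR with hR | hne
    · exact absurd hR h
    have hPhi : Phi (Γtop n k) l = l ++ [pmin (ins (Γtop n k) l) hne] := by
      rw [Phi, if_neg h, dif_pos hne]
    intro hF
    have h2 := hF.2
    rw [hPhi, getLast?_concat'] at h2
    exact h2 _ rfl (pmin_snd_zero_top hk hne)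

lemma global_sum (hn : 0 < n) (hk : 0 < k) :
    ∑ w : Words n k, (-1 : ℤ) ^ w.1.length =
      (-1) ^ n * ((Finset.univ.filter fun w : Words n k => Fixd n w.1).card : ℤ) := by
  rw [← Finset.sum_filter_add_sum_filter_not Finset.univ (fun w : Words n k => Fixd n w.1)]
  have h2 : ∑ w ∈ Finset.univ.filter (fun w : Words n k => ¬ Fixd n w.1),
      (-1 : ℤ) ^ w.1.length = 0 := by
    apply involution_sum (Γ := Γtop n k)
    · exact fun w _ => memC_top w.1
    · intro w hw hOK
      simp only [Finset.mem_filter, Finset.mem_univ, true_and] at hw ⊢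
      refine Finset.mem_filter.2 ⟨Finset.mem_univ (α := Words n k) _, ?_⟩
      apply phi_not_fixd hn hk w.2 (words_len_le w)
      by_cases hne : (ins (Γtop n k) w.1).Nonempty
      · exact Or.inr hne
      · rcases stuck_rem_top hn hk w.2 (Finset.not_nonempty_iff_eq_empty.1 hne) with hF | hRem
        · exact absurd hF hw
        · exact Or.inl hRem
    · intro w hw
      simp only [Finset.mem_filter, Finset.mem_univ, true_and] at hw
      by_cases hne : (ins (Γtop n k) w.1).Nonempty
      · exact Or.inr hne
      · rcases stuck_rem_top hn hk w.2 (Finset.not_nonempty_iff_eq_empty.1 hne) with hF | hRem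
        · exact absurd hF hw
        · exact Or.inl hRem
  rw [h2, add_zero]
  have hconst : ∑ w ∈ Finset.univ.filter (fun w : Words n k => Fixd n w.1),
      (-1 : ℤ) ^ w.1.length = ∑ _w ∈ Finset.univ.filter (fun w : Words n k => Fixd n w.1),
        (-1 : ℤ) ^ n := by
    apply Finset.sum_congr rfl
    intro w hw
    have := (Finset.mem_filter.1 hw).2.1
    rw [this]
  rw [hconst, Finset.sum_const, nsmul_eq_mul]
  ring

def ofPerm (σ : Equiv.Perm (Fin n)) (c : Fin n → Fin k) : List (Letter n k) :=
  List.ofFn fun i => (σ i, c (σ i))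

lemma len_ofPerm (σ : Equiv.Perm (Fin n)) (c : Fin n → Fin k) : (ofPerm σ c).length = n := by
  simp [ofPerm]

lemma get_ofPerm (σ : Equiv.Perm (Fin n)) (c : Fin n → Fin k) (j : ℕ)
    (hj : j < (ofPerm σ c).length) (hj' : j < n) :
    (ofPerm σ c).get ⟨j, hj⟩ = (σ ⟨j, hj'⟩, c (σ ⟨j, hj'⟩)) := by
  show (ofPerm σ c)[j] = _
  exact List.getElem_ofFn (f := fun i => (σ i, c (σ i))) hj

lemma chain'_ofPerm_iff (σ : Equiv.Perm (Fin n)) (c : Fin n → Fin k) :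
    (ofPerm σ c).Chain' NA ↔ ¬ HasAscent σ c := by
  show List.IsChain NA (ofPerm σ c) ↔ _
  rw [List.isChain_iff_getElem]
  constructor
  · rintro h ⟨i, hi, h1, h2⟩
    have hi' : i + 1 < (ofPerm σ c).length := by rw [len_ofPerm]; omega
    have hNA := h i hi'
    rw [show (ofPerm σ c)[i] = _ from get_ofPerm σ c i (by omega) (by omega),
      show (ofPerm σ c)[i + 1] = _ from get_ofPerm σ c (i + 1) hi' hi] at hNA
    exact hNA ⟨h1, h2⟩
  · intro h i hi'
    have hin : i + 1 < n := by rw [len_ofPerm] at hi'; exact hi'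
    rw [show (ofPerm σ c)[i] = _ from get_ofPerm σ c i (by omega) (by omega),
      show (ofPerm σ c)[i + 1] = _ from get_ofPerm σ c (i + 1) hi' hin]
    rintro ⟨h1, h2⟩
    exact h ⟨i, hin, h1, h2⟩

lemma nodup_ofPerm (σ : Equiv.Perm (Fin n)) (c : Fin n → Fin k) :
    (fsts (ofPerm σ c)).Nodup := by
  rw [fsts, ofPerm, List.map_ofFn]
  exact List.nodup_ofFn.2 (fun i j hij => σ.injective hij)

lemma getLast?_ofPerm (hn : 0 < n) (σ : Equiv.Perm (Fin n)) (c : Fin n → Fin k)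
    (pf : n - 1 < n) :
    (ofPerm σ c).getLast? = some (σ ⟨n - 1, pf⟩, c (σ ⟨n - 1, pf⟩)) := by
  rw [List.getLast?_eq_getElem?, len_ofPerm,
    show ofPerm σ c = List.ofFn (fun i => (σ i, c (σ i))) from rfl, List.getElem?_ofFn]
  simp [List.ofFnNthVal, pf]

lemma card_fix (hn : 0 < n) (pf : n - 1 < n) :
    Nat.card {w : Equiv.Perm (Fin n) × (Fin n → Fin k) //
        ¬ HasAscent w.1 w.2 ∧ (w.2 (w.1 ⟨n - 1, pf⟩)).val ≠ 0} =
      (Finset.univ.filter fun w : Words n k => Fixd n w.1).card := by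
  rw [← Nat.card_eq_finsetCard]
  apply Nat.card_congr
  have toMem : ∀ (σ : Equiv.Perm (Fin n)) (c : Fin n → Fin k), ¬ HasAscent σ c →
      (c (σ ⟨n - 1, pf⟩)).val ≠ 0 → ∃ h : OK (ofPerm σ c),
        (⟨ofPerm σ c, h⟩ : Words n k) ∈ Finset.univ.filter fun w : Words n k => Fixd n w.1 := by
    intro σ c hA hlast
    refine ⟨⟨(chain'_ofPerm_iff σ c).2 hA, nodup_ofPerm σ c⟩, ?_⟩
    refine Finset.mem_filter.2 ⟨Finset.mem_univ (α := Words n k) _, ?_⟩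
    refine ⟨len_ofPerm σ c, ?_⟩
    intro p hp
    rw [getLast?_ofPerm hn σ c pf] at hp
    simp only [Option.mem_def, Option.some.injEq] at hp
    rw [← hp]
    exact hlast
  refine Equiv.ofBijective (fun t => ⟨⟨ofPerm t.1.1 t.1.2, (toMem t.1.1 t.1.2 t.2.1 t.2.2).1⟩,
    (toMem t.1.1 t.1.2 t.2.1 t.2.2).2⟩) ⟨?_, ?_⟩
  · rintro ⟨⟨σ1, c1⟩, h1⟩ ⟨⟨σ2, c2⟩, h2⟩ heq
    simp only [Subtype.mk.injEq] at heq
    have heq2 : ofPerm σ1 c1 = ofPerm σ2 c2 := congrArg (fun x => x.1.1) heq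
    rw [show ofPerm σ1 c1 = List.ofFn (fun i => (σ1 i, c1 (σ1 i))) from rfl,
      show ofPerm σ2 c2 = List.ofFn (fun i => (σ2 i, c2 (σ2 i))) from rfl,
      List.ofFn_inj] at heq2
    have hσ : σ1 = σ2 := by
      apply Equiv.ext
      intro i
      exact congrArg Prod.fst (congrFun heq2 i)
    have hc : c1 = c2 := by
      funext x
      have := congrArg Prod.snd (congrFun heq2 (σ1.symm x))
      simp only at this
      rw [Equiv.apply_symm_apply] at this
      rw [this, hσ]
      rw [← hσ]
      rw [Equiv.apply_symm_apply]
    subst hσ hc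
    rfl
  · rintro ⟨⟨l, hOK⟩, hw⟩
    replace hw := (Finset.mem_filter.1 hw).2
    obtain ⟨hlen, hlast⟩ := hw
    have hgetlt : ∀ i : Fin n, (i : ℕ) < l.length := by
      intro i; rw [hlen]; exact i.2
    have hinj : Function.Injective (fun i : Fin n => (l[(i : ℕ)]'(hgetlt i)).1) := by
      intro i j hij
      have hnd : (l.map Prod.fst).Nodup := hOK.2
      have h1 : (l.map Prod.fst)[(i : ℕ)]'(by rw [List.length_map]; exact hgetlt i) =
          (l.map Prod.fst)[(j : ℕ)]'(by rw [List.length_map]; exact hgetlt j) := by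
        rw [List.getElem_map, List.getElem_map]
        exact hij
      have := (hnd.getElem_inj_iff).1 h1
      exact Fin.ext this
    have hbij := (Fintype.bijective_iff_injective_and_card _).2 ⟨hinj, rfl⟩
    set σ := Equiv.ofBijective _ hbij with hσdef
    have hσ : ∀ i : Fin n, σ i = (l[(i : ℕ)]'(hgetlt i)).1 := fun i => rfl
    set c : Fin n → Fin k := fun x => (l[((σ.symm x : Fin n) : ℕ)]'(hgetlt _)).2 with hcdef
    have hofperm : ofPerm σ c = l := by
      apply List.ext_getElem (by rw [len_ofPerm, hlen])
      intro i h1 h2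
      have hgo : (ofPerm σ c)[i]'h1 =
          (σ ⟨i, by rw [len_ofPerm] at h1; exact h1⟩,
           c (σ ⟨i, by rw [len_ofPerm] at h1; exact h1⟩)) :=
        List.getElem_ofFn (f := fun i => (σ i, c (σ i))) h1
      rw [hgo]
      have hc : c (σ ⟨i, by rw [len_ofPerm] at h1; exact h1⟩) = (l[i]'h2).2 := by
        show (l[(((σ.symm (σ ⟨i, by rw [len_ofPerm] at h1; exact h1⟩)) : Fin n) : ℕ)]'(hgetlt _)).2 = _
        simp only [Equiv.symm_apply_apply]
      rw [hc]
      have hs : σ ⟨i, by rw [len_ofPerm] at h1; exact h1⟩ = (l[i]'h2).1 := hσ _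
      rw [hs]
    refine ⟨⟨⟨σ, c⟩, ?_, ?_⟩, ?_⟩
    · rw [← chain'_ofPerm_iff σ c, hofperm]
      exact hOK.1
    · show (c (σ ⟨n - 1, pf⟩)).val ≠ 0
      have hmem : (σ ⟨n - 1, pf⟩, c (σ ⟨n - 1, pf⟩)) ∈ l.getLast? := by
        rw [← hofperm, getLast?_ofPerm hn σ c pf]
        rfl
      exact hlast (σ ⟨n - 1, pf⟩, c (σ ⟨n - 1, pf⟩)) hmem
    · apply Subtype.ext
      apply Subtype.ext
      exact hofperm


def bt (n k : ℕ) : WSubK n k := ⟨∅, 0, by simp⟩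

lemma bt_le (x : WSubK n k) : bt n k ≤ x := ⟨Finset.empty_subset _, Multiset.zero_le _⟩

lemma gfun_bt : gfun (bt n k) = 1 := by
  rw [gfun]
  have hset : (Finset.univ.filter fun w : Words n k => pr w = bt n k) =
      {(⟨[], ⟨List.isChain_nil, List.nodup_nil⟩⟩ : Words n k)} := by
    ext w
    simp only [Finset.mem_filter, Finset.mem_univ, true_and, Finset.mem_singleton]
    constructor
    · intro h
      refine Finset.mem_singleton.2 ?_
      apply Subtype.ext
      have hwt : (w.1.map Prod.snd : Multiset (Fin k)) = 0 := congrArg WSubK.wt h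
      have hnil : w.1.map Prod.snd = [] := by
        have := congrArg Multiset.card hwt
        simp only [Multiset.coe_card, Multiset.card_zero] at this
        exact List.length_eq_zero_iff.1 this
      exact List.map_eq_nil_iff.1 hnil
    · intro h
      rw [Finset.mem_singleton.1 h]
      rfl
  rw [hset]
  simp [bt]
  exact Finset.card_singleton _

lemma lt_card {z x : WSubK n k} (hle : z ≤ x) (hne : z ≠ x) :
    z.carrier.card < x.carrier.card := by
  rcases lt_or_eq_of_le (Finset.card_le_card hle.1) with h | h
  · exact h
  · exfalso
    apply hne
    have hcar : z.carrier = x.carrier := Finset.eq_of_subset_of_card_le hle.1 (le_of_eq h.symm)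
    apply WSubK.ext hcar
    apply Multiset.eq_of_le_of_card_le hle.2
    rw [z.card_eq, x.card_eq, hcar]

end MBAux

theorem moebius_of_hat_weighted_boolean_algebra (n k : ℕ) (hn : 1 ≤ n) (hk : 1 ≤ k)
    (S : WithTop (WSubK n k) → WithTop (WSubK n k) → Finset (WithTop (WSubK n k)))
    (hS : ∀ x y z : WithTop (WSubK n k), z ∈ S x y ↔ x ≤ z ∧ z ≤ y)
    (f : WithTop (WSubK n k) → WithTop (WSubK n k) → ℤ)
    (hrefl : ∀ x : WithTop (WSubK n k), f x x = 1)
    (hrec : ∀ x y : WithTop (WSubK n k), x < y → ∑ z ∈ S x y, f x z = 0) :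
    f ((⟨∅, 0, by simp⟩ : WSubK n k) : WithTop (WSubK n k)) ⊤ =
      (-1) ^ (n + 1) *
        (Nat.card {w : Equiv.Perm (Fin n) × (Fin n → Fin k) //
          ¬ HasAscent w.1 w.2 ∧ (w.2 (w.1 ⟨n - 1, by omega⟩)).val ≠ 0} : ℤ) := by
  classical
  have hb : ∀ z : WithTop (WSubK n k), (↑(MBAux.bt n k) : WithTop (WSubK n k)) ≤ z := by
    intro z
    induction z using WithTop.recTopCoe with
    | top => exact le_top
    | coe y => exact WithTop.coe_le_coe.2 (MBAux.bt_le y)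
  have hbeq : ((⟨∅, 0, by simp⟩ : WSubK n k) : WithTop (WSubK n k)) = ↑(MBAux.bt n k) := rfl
  rw [hbeq]
  have hf : ∀ m : ℕ, ∀ x : WSubK n k, x.carrier.card = m →
      f ↑(MBAux.bt n k) ↑x = MBAux.gfun x := by
    intro m
    induction m using Nat.strong_induction_on with
    | _ m IH =>
      intro x hxm
      by_cases hx : x.carrier = ∅
      · have hxb : x = MBAux.bt n k := by
          apply WSubK.ext hx
          have h2 := x.card_eq
          rw [hx] at h2
          simp at h2
          exact h2
        rw [hxb, MBAux.gfun_bt]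
        exact hrefl _
      · have hxne : x ≠ MBAux.bt n k := fun h => hx (congrArg WSubK.carrier h)
        have hlt : (↑(MBAux.bt n k) : WithTop (WSubK n k)) < ↑x :=
          lt_of_le_of_ne (hb _) (by
            intro h
            exact hxne ((WithTop.coe_inj.1 h).symm))
        have hrec0 := hrec _ _ hlt
        have hSx : S ↑(MBAux.bt n k) ↑x =
            (Finset.univ.filter (· ≤ x)).image (fun z : WSubK n k => (↑z : WithTop (WSubK n k))) := by
          ext z
          rw [hS]
          simp only [Finset.mem_image, Finset.mem_filter, Finset.mem_univ, true_and]
          constructor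
          · rintro ⟨h1, h2⟩
            induction z using WithTop.recTopCoe with
            | top => exact absurd h2 (by simp)
            | coe y => exact ⟨y, WithTop.coe_le_coe.1 h2, rfl⟩
          · rintro ⟨y, hy, rfl⟩
            exact ⟨hb _, WithTop.coe_le_coe.2 hy⟩
        rw [hSx, Finset.sum_image (by
          intro a _ b _ h
          exact WithTop.coe_inj.1 h)] at hrec0
        have hxmem : x ∈ Finset.univ.filter (· ≤ x) := by simp
        rw [← Finset.add_sum_erase _ _ hxmem] at hrec0
        have herase : ∑ y ∈ (Finset.univ.filter (· ≤ x)).erase x, f ↑(MBAux.bt n k) ↑y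
            = ∑ y ∈ (Finset.univ.filter (· ≤ x)).erase x, MBAux.gfun y := by
          apply Finset.sum_congr rfl
          intro y hy
          have hyle : y ≤ x := (Finset.mem_filter.1 (Finset.mem_of_mem_erase hy)).2
          have hcard : y.carrier.card < m := by
            rw [← hxm]
            exact MBAux.lt_card hyle (Finset.ne_of_mem_erase hy)
          exact IH _ hcard y rfl
        rw [herase] at hrec0
        have hsum0 := MBAux.interval_sum x (Finset.nonempty_iff_ne_empty.2 hx)
        rw [← Finset.add_sum_erase _ _ hxmem] at hsum0
        linarith [hrec0, hsum0]
  have htopset : S ↑(MBAux.bt n k) ⊤ =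
      insert ⊤ ((Finset.univ : Finset (WSubK n k)).image
        (fun z : WSubK n k => (↑z : WithTop (WSubK n k)))) := by
    ext z
    rw [hS]
    simp only [Finset.mem_insert, Finset.mem_image, Finset.mem_univ, true_and]
    constructor
    · intro _
      induction z using WithTop.recTopCoe with
      | top => exact Or.inl rfl
      | coe y => exact Or.inr ⟨y, rfl⟩
    · intro _
      exact ⟨hb _, le_top⟩
  have hrect := hrec _ _ (WithTop.coe_lt_top (MBAux.bt n k))
  rw [htopset, Finset.sum_insert (by simp), Finset.sum_image (by
    intro a _ b _ h
    exact WithTop.coe_inj.1 h)] at hrect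
  have hgs : ∑ x : WSubK n k, f ↑(MBAux.bt n k) ↑x = ∑ x : WSubK n k, MBAux.gfun x :=
    Finset.sum_congr rfl (fun x _ => hf _ x rfl)
  have htot : ∑ x : WSubK n k, MBAux.gfun x = ∑ w : MBAux.Words n k, (-1 : ℤ) ^ w.1.length :=
    MBAux.fiber_sum Finset.univ Finset.univ (fun _ _ => Finset.mem_univ _)
      (fun _ _ => Finset.mem_univ _)
  have hglob := MBAux.global_sum (n := n) (k := k) (by omega) (by omega)
  have hcf := MBAux.card_fix (n := n) (k := k) (by omega) (by omega)
  rw [hgs, htot, hglob] at hrect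
  rw [hcf]
  have : (-1 : ℤ) ^ (n + 1) = -(-1 : ℤ) ^ n := by
    rw [pow_succ]
    ring
  rw [this]
  linarith [hrect]
end

section
/- Let A be a set and let L ⊆ A × A be an arbitrary subset (the allowed links). Call a finite word a_1⋯a_m over A 'allowed' if (a_i, a_{i+1}) ∈ L for all 1 ≤ i < m, and 'forbidden' if (a_i, a_{i+1}) ∉ L for all 1 ≤ i < m (words of length ≤ 1 are both allowed and forbidden). Then for every n ≥ 1 and every word a_1⋯a_n ∈ A^n: ∑_{k=0}^{n} (−1)^{n−k} · [a_1⋯a_k is allowed] · [a_{k+1}⋯a_n is forbidden] = 0, where [·] is 1 if the condition holds and 0 otherwise. -/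
/-!
STATEMENT 14 (coefficient-wise Fröberg / Carlitz–Scoville–Vaughan / Gessel identity):
for any set of allowed links L ⊆ A × A and any word a_0 a_1 ⋯ a_{n-1} (n ≥ 1):
∑_{k=0}^{n} (−1)^{n−k} [a_0⋯a_{k-1} allowed] [a_k⋯a_{n-1} forbidden] = 0.

The word is given as a function `a : ℕ → A` (only the values `a 0, …, a (n-1)` occur
in the identity). The prefix of length `k` is allowed iff `L (a i) (a (i+1))` holds
for all `i` with `i+1 < k`; the suffix `a_k ⋯ a_{n-1}` is forbidden iff
`¬ L (a i) (a (i+1))` for all `i` with `k ≤ i` and `i+1 < n`.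
-/

attribute [local instance] Classical.propDecidable

theorem gessel_allowed_forbidden_factorization {A : Type*} (L : A → A → Prop)
    (n : ℕ) (hn : 1 ≤ n) (a : ℕ → A) :
    ∑ k ∈ Finset.range (n + 1),
        (-1 : ℤ) ^ (n - k) *
          ((if ∀ i : ℕ, i + 1 < k → L (a i) (a (i + 1)) then 1 else 0) *
           (if ∀ i : ℕ, k ≤ i → i + 1 < n → ¬ L (a i) (a (i + 1)) then 1 else 0)) = 0 := by
  classical
  have hzero : ∀ k : ℕ,
      ¬((∀ i : ℕ, i + 1 < k → L (a i) (a (i + 1))) ∧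
        (∀ i : ℕ, k ≤ i → i + 1 < n → ¬ L (a i) (a (i + 1)))) →
      ((if ∀ i : ℕ, i + 1 < k → L (a i) (a (i + 1)) then (1:ℤ) else 0) *
       (if ∀ i : ℕ, k ≤ i → i + 1 < n → ¬ L (a i) (a (i + 1)) then 1 else 0)) = 0 := by
    intro k hk
    by_cases h1 : (∀ i : ℕ, i + 1 < k → L (a i) (a (i + 1)))
    · by_cases h2 : (∀ i : ℕ, k ≤ i → i + 1 < n → ¬ L (a i) (a (i + 1)))
      · exact absurd ⟨h1, h2⟩ hk
      · simp [h2]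
    · simp [h1]
  by_cases hex : ∃ k : ℕ, (∀ i : ℕ, i + 1 < k → L (a i) (a (i + 1))) ∧
      (∀ i : ℕ, k ≤ i → i + 1 < n → ¬ L (a i) (a (i + 1)))
  · set c := Nat.find hex with hcdef
    obtain ⟨hPc, hQc⟩ := Nat.find_spec hex
    have hmin : ∀ m, m < c → ¬((∀ i : ℕ, i + 1 < m → L (a i) (a (i + 1))) ∧
        (∀ i : ℕ, m ≤ i → i + 1 < n → ¬ L (a i) (a (i + 1)))) := fun m hm =>
      Nat.find_min hex hm
    -- c < n
    have hlt : c < n := by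
      by_contra h
      push_neg at h
      have h1 : 1 ≤ c := le_trans hn h
      refine hmin (c - 1) (by omega) ⟨fun i hi => hPc i (by omega), fun i hi hin => ?_⟩
      exfalso; omega
    -- the prefix of length c+1 is allowed
    have hPc1 : ∀ i : ℕ, i + 1 < c + 1 → L (a i) (a (i + 1)) := by
      intro i hi
      by_cases h : i + 1 < c
      · exact hPc i h
      · have hieq : i + 1 = c := by omega
        by_contra hL
        refine hmin i (by omega) ⟨fun j hj => hPc j (by omega), fun j hji hjn => ?_⟩
        by_cases hj : j = i
        · subst hj; exact hL
        · exact hQc j (by omega) hjn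
    have hQc1 : ∀ i : ℕ, c + 1 ≤ i → i + 1 < n → ¬ L (a i) (a (i + 1)) :=
      fun i hi hin => hQc i (by omega) hin
    have hsub : ({c, c + 1} : Finset ℕ) ⊆ Finset.range (n + 1) := by
      intro x hx
      simp only [Finset.mem_insert, Finset.mem_singleton] at hx
      rw [Finset.mem_range]
      omega
    rw [← Finset.sum_subset hsub]
    · rw [Finset.sum_pair (by omega : c ≠ c + 1)]
      rw [if_pos hPc, if_pos hQc, if_pos hPc1, if_pos hQc1]
      have hnc : n - c = (n - (c + 1)) + 1 := by omega
      rw [hnc, pow_succ]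
      ring
    · intro x hx hnot
      simp only [Finset.mem_insert, Finset.mem_singleton, not_or] at hnot
      have hxn : x < n + 1 := Finset.mem_range.mp hx
      rw [hzero x ?_, mul_zero]
      rintro ⟨hPx, hQx⟩
      rcases Nat.lt_or_ge x c with h | h
      · exact hmin x h ⟨hPx, hQx⟩
      · have hx2 : c + 1 < x := by omega
        exact hQc c le_rfl (by omega) (hPx c (by omega))
  · refine Finset.sum_eq_zero fun k _ => ?_
    rw [hzero k (fun h => hex ⟨k, h⟩), mul_zero]
end

section
/- For every n ≥ 0 and k ≥ 1, the number of ascent-free colored permutations of [n] with colors in [k] is |Ninc_n^{[k]}| = ∑_{σ ∈ 𝔖_n} ∏_{B a maximal ascending run of σ} binom(k, |B|), where the product is over the maximal ascending runs of the word σ(1)⋯σ(n). -/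
/-- The maximal ascending runs of the word `σ(1)⋯σ(n)`. -/
def runs {n : ℕ} (σ : Equiv.Perm (Fin n)) : List (List (Fin n)) :=
  ((List.finRange n).map σ).splitBy (fun a b => decide (a < b))

section Aux

variable {α : Type*}

/-- Conjoin two `IsChain` statements. -/
private lemma chain'_and_of_chain' {R S : α → α → Prop} {l : List α}
    (h1 : l.IsChain R) (h2 : l.IsChain S) : l.IsChain fun a b => R a b ∧ S a b := by
  rw [List.isChain_iff_getElem] at h1 h2 ⊢
  exact fun i h => ⟨h1 i h, h2 i h⟩

/-- A `IsChain` condition that holds automatically at places where `r` fails can be checked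
chunk by chunk on `splitBy r`. -/
private lemma chain'_iff_splitBy (r : α → α → Bool) {R : α → α → Prop}
    (hf : ∀ a b, r a b = false → R a b) (l : List α) :
    l.IsChain R ↔ ∀ B ∈ l.splitBy r, B.IsChain R := by
  conv_lhs => rw [← List.flatten_splitBy r l]
  rw [List.isChain_flatten (List.nil_notMem_splitBy r l)]
  constructor
  · exact fun h => h.1
  · intro h
    refine ⟨h, (List.isChain_getLast_head_splitBy r l).imp ?_⟩
    rintro B B' ⟨hB, hB', hr⟩ x hx y hy
    rw [List.getLast?_eq_getLast_of_ne_nil hB, Option.mem_some_iff] at hx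
    rw [List.head?_eq_head hB', Option.mem_some_iff] at hy
    subst hx; subst hy
    exact hf _ _ hr

/-- The number of strictly decreasing maps `Fin ℓ → Fin k` is `C(k,ℓ)`. -/
private lemma card_strictAnti (k ℓ : ℕ) :
    Nat.card {g : Fin ℓ → Fin k // StrictAnti g} = Nat.choose k ℓ := by
  have e1 : {g : Fin ℓ → Fin k // StrictAnti g} ≃ {g : Fin ℓ → Fin k // StrictMono g} :=
    { toFun := fun g => ⟨fun i => (g.1 i).rev, fun i j h => Fin.rev_lt_rev.2 (g.2 h)⟩
      invFun := fun g => ⟨fun i => (g.1 i).rev, fun i j h => Fin.rev_lt_rev.2 (g.2 h)⟩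
      left_inv := fun g => by ext i; simp
      right_inv := fun g => by ext i; simp }
  have e2 : {g : Fin ℓ → Fin k // StrictMono g} ≃ {s : Finset (Fin k) // s.card = ℓ} :=
    { toFun := fun g => ⟨Finset.univ.image g.1, by
        rw [Finset.card_image_of_injective _ g.2.injective, Finset.card_univ, Fintype.card_fin]⟩
      invFun := fun s => ⟨s.1.orderEmbOfFin s.2, (s.1.orderEmbOfFin s.2).strictMono⟩
      left_inv := fun g => Subtype.ext <|
        (Finset.orderEmbOfFin_unique _
          (fun x => Finset.mem_image_of_mem _ (Finset.mem_univ x)) g.2).symm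
      right_inv := fun s => Subtype.ext <| Finset.coe_inj.1 <| by
        rw [Finset.coe_image, Finset.coe_univ, Set.image_univ, Finset.range_orderEmbOfFin] }
  rw [Nat.card_congr (e1.trans e2), Nat.card_eq_fintype_card, Fintype.card_finset_len,
    Fintype.card_fin]

/-- Chunk chain condition in terms of strict antitonicity of the values along the chunk. -/
private lemma chain'_map_iff_strictAnti {k : ℕ} (B : List α) (c : α → Fin k) :
    (B.map c).IsChain (fun x y => y < x) ↔
      StrictAnti (fun i : Fin B.length => c (B.get i)) := by
  haveI : Trans (fun x y : Fin k => y < x) (fun x y : Fin k => y < x) (fun x y : Fin k => y < x) :=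
    ⟨fun h1 h2 => lt_trans h2 h1⟩
  rw [List.isChain_iff_pairwise, List.pairwise_iff_getElem]
  constructor
  · intro h i j hij
    have := h i j (by simpa using i.2) (by simpa using j.2) hij
    simpa [List.get_eq_getElem] using this
  · intro h i j hi hj hij
    have := h (a := ⟨i, by simpa using hi⟩) (b := ⟨j, by simpa using hj⟩) hij
    simpa [List.get_eq_getElem] using this

/-- Key counting lemma: if the lists in `L` jointly enumerate `α` without repetition, then
the number of colorings `c : α → Fin k` which are strictly decreasing along each list of `L`
is the product of the binomial coefficients `C(k, |B|)`. -/
private lemma key_count [Fintype α] [DecidableEq α] (k : ℕ) (L : List (List α))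
    (hnd : L.flatten.Nodup) (hcomp : ∀ a : α, a ∈ L.flatten) :
    Nat.card {c : α → Fin k // ∀ B ∈ L, (B.map c).IsChain (fun x y => y < x)} =
      (L.map fun B => Nat.choose k B.length).prod := by
  classical
  obtain ⟨hnodup, hdisj⟩ := List.nodup_flatten.mp hnd
  have hbij : Function.Bijective
      (fun p : Σ j : Fin L.length, Fin (L.get j).length => (L.get p.1).get p.2) := by
    constructor
    · rintro ⟨j, i⟩ ⟨j', i'⟩ h
      have h' : (L.get j).get i = (L.get j').get i' := h
      rcases lt_trichotomy j j' with hjj | hjj | hjj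
      · have h2 : (L.get j).get i ∈ L.get j' := by rw [h']; exact List.get_mem _ _
        exact absurd ((List.pairwise_iff_get.mp hdisj j j' hjj)
          (List.get_mem _ _) h2) (fun q => q)
      · subst hjj
        have hii : i = i' := ((hnodup _ (List.get_mem _ _)).get_inj_iff).mp h'
        subst hii; rfl
      · have h2 : (L.get j').get i' ∈ L.get j := by rw [← h']; exact List.get_mem _ _
        exact absurd ((List.pairwise_iff_get.mp hdisj j' j hjj)
          (List.get_mem _ _) h2) (fun q => q)
    · intro a
      obtain ⟨B, hBL, haB⟩ := List.mem_flatten.mp (hcomp a)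
      obtain ⟨j, hj⟩ := List.mem_iff_get.mp hBL
      subst hj
      obtain ⟨i, hi⟩ := List.mem_iff_get.mp haB
      exact ⟨⟨j, i⟩, hi⟩
  let e : (Σ j : Fin L.length, Fin (L.get j).length) ≃ α := Equiv.ofBijective _ hbij
  have step1 : {c : α → Fin k // ∀ B ∈ L, (B.map c).IsChain (fun x y => y < x)} ≃
      {f : (Σ j : Fin L.length, Fin (L.get j).length) → Fin k //
        ∀ j, StrictAnti (fun i => f ⟨j, i⟩)} := by
    refine Equiv.subtypeEquiv (Equiv.arrowCongr e.symm (Equiv.refl _)) fun c => ?_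
    have h1 : (∀ B ∈ L, (B.map c).IsChain (fun x y => y < x)) ↔
        ∀ j : Fin L.length, ((L.get j).map c).IsChain (fun x y => y < x) := by
      constructor
      · exact fun h j => h _ (List.get_mem _ _)
      · intro h B hB
        obtain ⟨j, rfl⟩ := List.mem_iff_get.mp hB
        exact h j
    rw [h1]
    refine forall_congr' fun j => ?_
    rw [chain'_map_iff_strictAnti]
    constructor
    · intro h a b hab
      have := h hab
      simpa [e, Equiv.arrowCongr] using this
    · intro h a b hab
      have := h hab
      simpa [e, Equiv.arrowCongr] using this
  have step2 : {f : (Σ j : Fin L.length, Fin (L.get j).length) → Fin k //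
        ∀ j, StrictAnti (fun i => f ⟨j, i⟩)} ≃
      Π j : Fin L.length, {g : Fin (L.get j).length → Fin k // StrictAnti g} :=
    (Equiv.subtypeEquiv (Equiv.piCurry fun _ _ => Fin k) fun f => Iff.rfl).trans
      Equiv.subtypePiEquivPi
  rw [Nat.card_congr (step1.trans step2), Nat.card_pi]
  have : ∀ j : Fin L.length,
      Nat.card {g : Fin (L.get j).length → Fin k // StrictAnti g} =
        Nat.choose k (L.get j).length := fun j => card_strictAnti k _
  rw [Finset.prod_congr rfl fun j _ => this j]
  simpa [List.get_eq_getElem] using Fin.prod_univ_fun_getElem L fun B => Nat.choose k B.length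

end Aux

theorem colored_exterior_dimension_runs (n k : ℕ) (hk : 1 ≤ k) :
    Nat.card {w : Equiv.Perm (Fin n) × (Fin n → Fin k) // ¬ HasAscent w.1 w.2} =
      ∑ σ : Equiv.Perm (Fin n), ((runs σ).map (fun B => Nat.choose k B.length)).prod := by
  classical
  rw [Nat.card_congr (Equiv.subtypeProdEquivSigmaSubtype
    (fun (σ : Equiv.Perm (Fin n)) (c : Fin n → Fin k) => ¬ HasAscent σ c))]
  letI : ∀ σ : Equiv.Perm (Fin n), Fintype {c : Fin n → Fin k // ¬ HasAscent σ c} :=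
    fun σ => Fintype.ofFinite _
  rw [Nat.card_eq_fintype_card, Fintype.card_sigma]
  refine Finset.sum_congr rfl fun σ _ => ?_
  rw [← Nat.card_eq_fintype_card]
  set l : List (Fin n) := (List.finRange n).map σ with hl
  have hlen : l.length = n := by simp [hl]
  have hget : ∀ (i : ℕ) (hi : i < l.length), l[i]'hi = σ ⟨i, hlen ▸ hi⟩ := by
    intro i hi
    simp [hl, List.get_eq_getElem, List.getElem_map, List.getElem_finRange, Fin.cast]
  have hflat : (runs σ).flatten = l := List.flatten_splitBy _ _
  have hnd : (runs σ).flatten.Nodup := by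
    rw [hflat, hl]
    exact (List.nodup_finRange n).map (Equiv.injective σ)
  have hcomp : ∀ a : Fin n, a ∈ (runs σ).flatten := by
    intro a
    rw [hflat, hl, List.mem_map]
    exact ⟨σ.symm a, List.mem_finRange _, σ.apply_symm_apply a⟩
  have hiff : ∀ c : Fin n → Fin k, (¬ HasAscent σ c) ↔
      ∀ B ∈ runs σ, (B.map c).IsChain (fun x y => y < x) := by
    intro c
    have hA : (¬ HasAscent σ c) ↔ l.IsChain (fun a b => a < b → c b < c a) := by
      rw [HasAscent]
      push_neg
      rw [List.isChain_iff_getElem]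
      constructor
      · intro h i hi
        rw [hget i (by omega), hget (i + 1) (by omega)]
        intro hlt
        exact h i (by omega) hlt
      · intro h i hi hlt
        have := h i (by omega)
        rw [hget i (by omega), hget (i + 1) (by omega)] at this
        exact this hlt
    rw [hA, chain'_iff_splitBy (fun a b => decide (a < b))
      (fun a b hab hlt => absurd hlt (by simpa using hab)) l]
    refine forall_congr' fun B => forall_congr' fun hB => ?_
    have hBlt : B.IsChain (fun a b => a < b) := by
      have := List.isChain_of_mem_splitBy hB
      exact this.imp fun a b h => by simpa using h
    rw [List.isChain_map]
    constructor
    · intro h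
      exact (chain'_and_of_chain' h hBlt).imp fun a b hab => hab.1 hab.2
    · intro h
      exact h.imp fun a b hab => fun _ : a < b => hab
  rw [Nat.card_congr (Equiv.subtypeEquivRight hiff)]
  exact key_count k (runs σ) hnd hcomp
end
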